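/- arXiv:2407.16847 — 8 statements merged into one kernel-verified Lean document; each statement's English description precedes it below -/
import Mathlib

section
/- Let X, s, κ, m, n be positive integers with X = κ·s and m ≥ n. Let P_X be the strided mask with stride X and let TB be a thread-block of size m×n with anchor (x₀, y₀) ∈ P_X and stretch factor s. Then |Cov(TB)| = ⌈(m−n+1)/κ⌉·n + Σ_{k=⌈(m−n+1)/κ⌉}^{⌈(m−1)/κ⌉} max(m − k·κ, 0) + Σ_{k=1}^{⌈(n−1)/κ⌉} max(n − k·κ, 0). -/
/-- The compute set of an `m × n` thread-block with anchor `(x₀, y₀)`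
and stretch factor `s`. -/
def Comp (x₀ y₀ s : ℤ) (m n : ℕ) : Set (ℤ × ℤ) :=
  {p | ∃ i j : ℕ, i < n ∧ j < m ∧ p = (x₀ + i * s, y₀ + j * s)}

/-- The strided mask with stride `X`. -/
def stridedMask (X : ℕ) : Set (ℤ × ℤ) :=
  {p | (X : ℤ) ∣ p.1 - p.2}

open Finset

/-- Integer Icc as Ico. -/
private lemma Icc_eq_Ico_int (a b : ℤ) : Finset.Icc a b = Finset.Ico a (b + 1) := by
  ext x; simp [Finset.mem_Icc, Finset.mem_Ico]

/-- Core diagonal count in ℕ. -/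
private lemma count_diag (κ m n : ℕ) (hκ : 0 < κ) (hmn : n ≤ m) :
    ((Finset.range n ×ˢ Finset.range m).filter
      (fun p => (κ : ℤ) ∣ (p.1 : ℤ) - (p.2 : ℤ))).card
    = (∑ k ∈ Finset.range (m + 1), min n (m - k * κ))
      + ∑ k ∈ Finset.Icc 1 m, (n - k * κ) := by
  classical
  set S := (Finset.range n ×ˢ Finset.range m).filter
      (fun p => (κ : ℤ) ∣ (p.1 : ℤ) - (p.2 : ℤ)) with hS
  have hsplit := Finset.card_filter_add_card_filter_not
    (s := S) (p := fun p : ℕ × ℕ => p.1 ≤ p.2)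
  have hmemS : ∀ p : ℕ × ℕ, p ∈ S ↔ p.1 < n ∧ p.2 < m ∧ (κ : ℤ) ∣ (p.1 : ℤ) - (p.2 : ℤ) := by
    intro p
    simp [hS, Finset.mem_filter, Finset.mem_product, Finset.mem_range, and_assoc]
  have h1 : (S.filter (fun p => p.1 ≤ p.2)).card
      = ∑ k ∈ Finset.range (m + 1), min n (m - k * κ) := by
    have hcs : ∑ k ∈ Finset.range (m + 1), min n (m - k * κ)
        = ((Finset.range (m + 1)).sigma (fun k => Finset.range (min n (m - k * κ)))).card := by
      rw [Finset.card_sigma]; simp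
    rw [hcs]
    refine (Finset.card_bij'
      (i := fun (q : Σ _ : ℕ, ℕ) _ => ((q.2, q.2 + q.1 * κ) : ℕ × ℕ))
      (j := fun (p : ℕ × ℕ) _ => (⟨(p.2 - p.1) / κ, p.1⟩ : Σ _ : ℕ, ℕ))
      ?_ ?_ ?_ ?_).symm
    · rintro ⟨k, i⟩ hq
      simp only [Finset.mem_sigma, Finset.mem_range] at hq
      simp only [Finset.mem_filter, hmemS]
      refine ⟨⟨by omega, by omega, ⟨-(k : ℤ), by push_cast; ring⟩⟩, by omega⟩
    · rintro ⟨i, j⟩ hp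
      simp only [Finset.mem_filter, hmemS] at hp
      obtain ⟨⟨hi, hj, hd⟩, hij⟩ := hp
      have hdn : κ ∣ j - i := by
        have : (κ : ℤ) ∣ ((j - i : ℕ) : ℤ) := by
          push_cast [hij]
          simpa [neg_sub] using dvd_neg.mpr hd
        exact_mod_cast this
      have hmul : (j - i) / κ * κ = j - i := Nat.div_mul_cancel hdn
      simp only [Finset.mem_sigma, Finset.mem_range]
      constructor
      · have : (j - i) / κ ≤ j - i := Nat.div_le_self _ _
        omega
      · omega
    · rintro ⟨k, i⟩ hq
      simp only [Finset.mem_sigma, Finset.mem_range] at hq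
      have hmd : k * κ / κ = k := Nat.mul_div_cancel k hκ
      simp [hmd]
    · rintro ⟨i, j⟩ hp
      simp only [Finset.mem_filter, hmemS] at hp
      obtain ⟨⟨hi, hj, hd⟩, hij⟩ := hp
      have hdn : κ ∣ j - i := by
        have : (κ : ℤ) ∣ ((j - i : ℕ) : ℤ) := by
          push_cast [hij]
          simpa [neg_sub] using dvd_neg.mpr hd
        exact_mod_cast this
      have hmul : (j - i) / κ * κ = j - i := Nat.div_mul_cancel hdn
      have hj2 : i + (j - i) / κ * κ = j := by omega
      simp [hj2]
  have h2 : (S.filter (fun p => ¬ p.1 ≤ p.2)).card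
      = ∑ k ∈ Finset.Icc 1 m, (n - k * κ) := by
    have hcs : ∑ k ∈ Finset.Icc 1 m, (n - k * κ)
        = ((Finset.Icc 1 m).sigma (fun k => Finset.range (n - k * κ))).card := by
      rw [Finset.card_sigma]; simp
    rw [hcs]
    refine (Finset.card_bij'
      (i := fun (q : Σ _ : ℕ, ℕ) _ => ((q.2 + q.1 * κ, q.2) : ℕ × ℕ))
      (j := fun (p : ℕ × ℕ) _ => (⟨(p.1 - p.2) / κ, p.2⟩ : Σ _ : ℕ, ℕ))
      ?_ ?_ ?_ ?_).symm
    · rintro ⟨k, j⟩ hq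
      simp only [Finset.mem_sigma, Finset.mem_range, Finset.mem_Icc] at hq
      obtain ⟨⟨hk1, hkm⟩, hjlt⟩ := hq
      simp only [Finset.mem_filter, hmemS]
      have hkκ : 1 * 1 ≤ k * κ := Nat.mul_le_mul hk1 hκ
      refine ⟨⟨by omega, by omega, ⟨(k : ℤ), by push_cast; ring⟩⟩, by omega⟩
    · rintro ⟨i, j⟩ hp
      simp only [Finset.mem_filter, hmemS] at hp
      obtain ⟨⟨hi, hj, hd⟩, hij⟩ := hp
      have hdn : κ ∣ i - j := by
        have : (κ : ℤ) ∣ ((i - j : ℕ) : ℤ) := by push_cast [le_of_not_ge hij]; exact hd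
        exact_mod_cast this
      have hmul : (i - j) / κ * κ = i - j := Nat.div_mul_cancel hdn
      have hdiv_le : (i - j) / κ ≤ i - j := Nat.div_le_self _ _
      have hpos : 1 ≤ (i - j) / κ := by
        have hlt : 0 < i - j := by omega
        exact Nat.div_pos (Nat.le_of_dvd hlt hdn) hκ
      simp only [Finset.mem_sigma, Finset.mem_range, Finset.mem_Icc]
      exact ⟨⟨hpos, by omega⟩, by omega⟩
    · rintro ⟨k, j⟩ hq
      simp only [Finset.mem_sigma, Finset.mem_range, Finset.mem_Icc] at hq
      have hmd : k * κ / κ = k := Nat.mul_div_cancel k hκ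
      simp [hmd]
    · rintro ⟨i, j⟩ hp
      simp only [Finset.mem_filter, hmemS] at hp
      obtain ⟨⟨hi, hj, hd⟩, hij⟩ := hp
      have hdn : κ ∣ i - j := by
        have : (κ : ℤ) ∣ ((i - j : ℕ) : ℤ) := by push_cast [le_of_not_ge hij]; exact hd
        exact_mod_cast this
      have hmul : (i - j) / κ * κ = i - j := Nat.div_mul_cancel hdn
      have hj2 : j + (i - j) / κ * κ = i := by omega
      simp [hj2]
  omega


/-- Exact cover size of a thread-block anchored on a strided mask with
stride `X = κ·s`, for `m ≥ n`. -/
theorem cover_card_strided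
    (X s κ m n : ℕ) (hX : 0 < X) (hs : 0 < s) (hκ : 0 < κ)
    (hXκ : X = κ * s) (hm : 0 < m) (hn : 0 < n) (hmn : n ≤ m)
    (x₀ y₀ : ℤ) (hanchor : (x₀, y₀) ∈ stridedMask X) :
    ((Comp x₀ y₀ (s : ℤ) m n ∩ stridedMask X).ncard : ℤ) =
      ⌈((m : ℚ) - n + 1) / κ⌉ * n
        + ∑ k ∈ Finset.Icc ⌈((m : ℚ) - n + 1) / κ⌉ ⌈((m : ℚ) - 1) / κ⌉,
            max ((m : ℤ) - k * κ) 0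
        + ∑ k ∈ Finset.Icc (1 : ℤ) ⌈((n : ℚ) - 1) / κ⌉,
            max ((n : ℤ) - k * κ) 0 := by
  classical
  obtain ⟨t, ht⟩ := hanchor
  have hsZ : (s : ℤ) ≠ 0 := by exact_mod_cast hs.ne'
  have hκQ : (0 : ℚ) < κ := by exact_mod_cast hκ
  have hκZ : (1 : ℤ) ≤ κ := by exact_mod_cast hκ
  have hκ1 : (1 : ℚ) ≤ κ := by exact_mod_cast hκ
  have hnQm : (n : ℚ) ≤ m := by exact_mod_cast hmn
  have hnQ : (1 : ℚ) ≤ n := by exact_mod_cast hn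
  have hmQ : (1 : ℚ) ≤ m := by exact_mod_cast hm
  have hdvd_iff : ∀ i j : ℕ,
      ((X : ℤ) ∣ (x₀ + i * s) - (y₀ + j * s)) ↔ ((κ : ℤ) ∣ (i : ℤ) - j) := by
    intro i j
    have hexpr : (x₀ + i * s) - (y₀ + j * s) = (X : ℤ) * t + ((i : ℤ) - j) * s := by
      rw [← ht]; ring
    rw [hexpr, dvd_add_right (Dvd.intro t rfl),
      show (X : ℤ) = (κ : ℤ) * s by exact_mod_cast hXκ,
      mul_dvd_mul_iff_right hsZ]
  set f : ℕ × ℕ → ℤ × ℤ := fun p => (x₀ + p.1 * s, y₀ + p.2 * s) with hf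
  set S := (Finset.range n ×ˢ Finset.range m).filter
      (fun p => (κ : ℤ) ∣ (p.1 : ℤ) - (p.2 : ℤ)) with hSdef
  have hinj : Set.InjOn f (S : Set (ℕ × ℕ)) := by
    intro p _ q _ h
    simp only [hf, Prod.mk.injEq] at h
    obtain ⟨h1, h2⟩ := h
    have e1 : (p.1 : ℤ) = q.1 := mul_right_cancel₀ hsZ (by linarith)
    have e2 : (p.2 : ℤ) = q.2 := mul_right_cancel₀ hsZ (by linarith)
    have : p.1 = q.1 := by exact_mod_cast e1
    have : p.2 = q.2 := by exact_mod_cast e2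
    exact Prod.ext (by assumption) (by assumption)
  have hset : Comp x₀ y₀ (s : ℤ) m n ∩ stridedMask X = ↑(S.image f) := by
    ext ⟨a, b⟩
    simp only [Set.mem_inter_iff, Comp, stridedMask, Set.mem_setOf_eq, Finset.coe_image,
      Set.mem_image, Finset.mem_coe, hSdef, Finset.mem_filter, Finset.mem_product,
      Finset.mem_range, Prod.exists, hf, Prod.mk.injEq]
    constructor
    · rintro ⟨⟨i, j, hi, hj, ha, hb⟩, hdvd⟩
      subst ha; subst hb
      exact ⟨i, j, ⟨⟨hi, hj⟩, (hdvd_iff i j).mp hdvd⟩, rfl, rfl⟩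
    · rintro ⟨i, j, ⟨⟨hi, hj⟩, hd⟩, ha, hb⟩
      subst ha; subst hb
      exact ⟨⟨i, j, hi, hj, rfl, rfl⟩, (hdvd_iff i j).mpr hd⟩
  rw [hset, Set.ncard_coe_finset, Finset.card_image_of_injOn hinj,
    count_diag κ m n hκ hmn]
  -- ceilings
  set c1 := ⌈((m : ℚ) - n + 1) / κ⌉ with hc1
  set c2 := ⌈((m : ℚ) - 1) / κ⌉ with hc2
  set c3 := ⌈((n : ℚ) - 1) / κ⌉ with hc3
  have hc1pos : 1 ≤ c1 :=
    Int.ceil_pos.mpr (div_pos (by linarith) hκQ)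
  have hmulm : (m : ℚ) * 1 ≤ (m : ℚ) * κ :=
    mul_le_mul_of_nonneg_left hκ1 (by positivity)
  have hc1m : c1 ≤ m := Int.ceil_le.mpr (by rw [div_le_iff₀ hκQ]; push_cast; linarith)
  have hc2m : c2 ≤ m := Int.ceil_le.mpr (by rw [div_le_iff₀ hκQ]; push_cast; linarith)
  have hc3m : c3 ≤ m := Int.ceil_le.mpr (by rw [div_le_iff₀ hκQ]; push_cast; linarith)
  have hA : ∀ k : ℤ, k < c1 → k * κ ≤ (m : ℤ) - n := by
    intro k hk
    have hk' : (k : ℚ) ≤ (c1 : ℚ) - 1 := by exact_mod_cast Int.le_sub_one_of_lt hk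
    have hceil : (c1 : ℚ) < ((m : ℚ) - n + 1) / κ + 1 := Int.ceil_lt_add_one _
    have h1 : (k : ℚ) < ((m : ℚ) - n + 1) / κ := by linarith
    have h2 : (k : ℚ) * κ < (m : ℚ) - n + 1 := (lt_div_iff₀ hκQ).mp h1
    have h3 : (k * κ : ℤ) < (m : ℤ) - n + 1 := by exact_mod_cast h2
    omega
  have hB : ∀ k : ℤ, c1 ≤ k → (m : ℤ) - n + 1 ≤ k * κ := by
    intro k hk
    have h1 : ((m : ℚ) - n + 1) / κ ≤ (k : ℚ) :=
      le_trans (Int.le_ceil _) (Int.cast_le.mpr hk)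
    have h2 : (m : ℚ) - n + 1 ≤ (k : ℚ) * κ := (div_le_iff₀ hκQ).mp h1
    exact_mod_cast h2
  have hC : ∀ k : ℤ, c2 < k → (m : ℤ) ≤ k * κ := by
    intro k hk
    have hk' : (c2 : ℚ) ≤ (k : ℚ) - 1 := by exact_mod_cast Int.le_sub_one_of_lt hk
    have h1 : ((m : ℚ) - 1) / κ ≤ (k : ℚ) - 1 := le_trans (Int.le_ceil _) hk'
    have h2 : (m : ℚ) - 1 ≤ ((k : ℚ) - 1) * κ := (div_le_iff₀ hκQ).mp h1
    have h3 : ((m : ℤ) - 1) ≤ (k - 1) * κ := by exact_mod_cast h2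
    nlinarith
  have hD : ∀ k : ℤ, c3 < k → (n : ℤ) ≤ k * κ := by
    intro k hk
    have hk' : (c3 : ℚ) ≤ (k : ℚ) - 1 := by exact_mod_cast Int.le_sub_one_of_lt hk
    have h1 : ((n : ℚ) - 1) / κ ≤ (k : ℚ) - 1 := le_trans (Int.le_ceil _) hk'
    have h2 : (n : ℚ) - 1 ≤ ((k : ℚ) - 1) * κ := (div_le_iff₀ hκQ).mp h1
    have h3 : ((n : ℤ) - 1) ≤ (k - 1) * κ := by exact_mod_cast h2
    nlinarith
  -- cast the two ℕ sums to ℤ sums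
  have hcastmin : ∀ a b c : ℕ, ((min a (b - c) : ℕ) : ℤ) = min (a : ℤ) (max ((b : ℤ) - c) 0) := by
    intro a b c; omega
  have hcastsub : ∀ a c : ℕ, (((a - c : ℕ)) : ℤ) = max ((a : ℤ) - c) 0 := by
    intro a c; omega
  have LHS1 : ((∑ k ∈ Finset.range (m + 1), min n (m - k * κ) : ℕ) : ℤ) =
      ∑ k ∈ Finset.Icc (0 : ℤ) m, min (n : ℤ) (max ((m : ℤ) - k * κ) 0) := by
    rw [Nat.cast_sum]
    refine Finset.sum_bij' (i := fun (k : ℕ) _ => (k : ℤ)) (j := fun (k : ℤ) _ => k.toNat)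
      ?_ ?_ ?_ ?_ ?_
    · intro a ha
      simp only [Finset.mem_range] at ha
      simp only [Finset.mem_Icc]
      omega
    · intro a ha
      simp only [Finset.mem_Icc] at ha
      simp only [Finset.mem_range]
      omega
    · intro a _; simp
    · intro a ha
      simp only [Finset.mem_Icc] at ha
      simp; omega
    · intro a _
      rw [show ((a : ℤ)) * (κ : ℤ) = ((a * κ : ℕ) : ℤ) by push_cast; ring]
      exact hcastmin n m (a * κ)
  have LHS2 : ((∑ k ∈ Finset.Icc 1 m, (n - k * κ) : ℕ) : ℤ) =
      ∑ k ∈ Finset.Icc (1 : ℤ) m, max ((n : ℤ) - k * κ) 0 := by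
    rw [Nat.cast_sum]
    refine Finset.sum_bij' (i := fun (k : ℕ) _ => (k : ℤ)) (j := fun (k : ℤ) _ => k.toNat)
      ?_ ?_ ?_ ?_ ?_
    · intro a ha
      simp only [Finset.mem_Icc] at ha
      simp only [Finset.mem_Icc]
      omega
    · intro a ha
      simp only [Finset.mem_Icc] at ha
      simp only [Finset.mem_Icc]
      omega
    · intro a _; simp
    · intro a ha
      simp only [Finset.mem_Icc] at ha
      simp; omega
    · intro a _
      rw [show ((a : ℤ)) * (κ : ℤ) = ((a * κ : ℕ) : ℤ) by push_cast; ring]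
      exact hcastsub n (a * κ)
  -- extend the two RHS sums to common ranges
  have R3 : ∑ k ∈ Finset.Icc (1 : ℤ) c3, max ((n : ℤ) - k * κ) 0
      = ∑ k ∈ Finset.Icc (1 : ℤ) (m : ℤ), max ((n : ℤ) - k * κ) 0 := by
    refine Finset.sum_subset (Finset.Icc_subset_Icc_right hc3m) ?_
    intro k hk hk'
    simp only [Finset.mem_Icc] at hk hk'
    have hc : c3 < k := by omega
    have := hD k hc
    exact max_eq_right (by linarith)
  have R2 : ∑ k ∈ Finset.Icc c1 c2, max ((m : ℤ) - k * κ) 0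
      = ∑ k ∈ Finset.Icc c1 (m : ℤ), max ((m : ℤ) - k * κ) 0 := by
    refine Finset.sum_subset (Finset.Icc_subset_Icc_right hc2m) ?_
    intro k hk hk'
    simp only [Finset.mem_Icc] at hk hk'
    have hc : c2 < k := by omega
    have := hC k hc
    exact max_eq_right (by linarith)
  -- main rearrangement
  have hmZ : (0 : ℤ) ≤ n := by positivity
  have Emain : ∑ k ∈ Finset.Icc (0 : ℤ) (m : ℤ), min (n : ℤ) (max ((m : ℤ) - k * κ) 0)
      = c1 * n + ∑ k ∈ Finset.Icc c1 (m : ℤ), max ((m : ℤ) - k * κ) 0 := by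
    have e1 : ∑ k ∈ Finset.Ico (0 : ℤ) c1, min (n : ℤ) (max ((m : ℤ) - k * κ) 0)
        = c1 * n := by
      have hpt : ∀ k ∈ Finset.Ico (0 : ℤ) c1,
          min (n : ℤ) (max ((m : ℤ) - k * κ) 0) = (n : ℤ) := by
        intro k hk
        simp only [Finset.mem_Ico] at hk
        have h1 := hA k hk.2
        have h2 : (0 : ℤ) ≤ k * κ := mul_nonneg hk.1 (by omega)
        have h3 : (n : ℤ) ≤ (m : ℤ) - k * κ := by omega
        rw [max_eq_left (by omega), min_eq_left h3]
      rw [Finset.sum_congr rfl hpt, Finset.sum_const, Int.card_Ico, nsmul_eq_mul,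
        Int.toNat_of_nonneg (by omega)]
      ring
    have e2 : ∑ k ∈ Finset.Ico c1 ((m : ℤ) + 1), min (n : ℤ) (max ((m : ℤ) - k * κ) 0)
        = ∑ k ∈ Finset.Ico c1 ((m : ℤ) + 1), max ((m : ℤ) - k * κ) 0 := by
      refine Finset.sum_congr rfl (fun k hk => ?_)
      simp only [Finset.mem_Ico] at hk
      have h1 := hB k hk.1
      exact min_eq_right (max_le (by linarith) hmZ)
    have hunion : Finset.Ico (0 : ℤ) c1 ∪ Finset.Ico c1 ((m : ℤ) + 1)
        = Finset.Ico (0 : ℤ) ((m : ℤ) + 1) :=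
      Finset.Ico_union_Ico_eq_Ico (by omega) (by omega)
    have hdisj : Disjoint (Finset.Ico (0 : ℤ) c1) (Finset.Ico c1 ((m : ℤ) + 1)) :=
      Finset.Ico_disjoint_Ico_consecutive _ _ _
    rw [Icc_eq_Ico_int, Icc_eq_Ico_int, ← hunion, Finset.sum_union hdisj, e1, e2]
  push_cast [LHS1, LHS2]
  rw [Emain, R2, R3]
end

section
/- Let X, s, m, n be positive integers with m ≥ n and set κ = X / gcd(s, X). Let P_X be the strided mask with stride X and let TB be a thread-block of size m×n with anchor (x₀, y₀) ∈ P_X and stretch factor s. Then |Cov(TB)| = ⌈(m−n+1)/κ⌉·n + Σ_{k=⌈(m−n+1)/κ⌉}^{⌈(m−1)/κ⌉} max(m − k·κ, 0) + Σ_{k=1}^{⌈(n−1)/κ⌉} max(n − k·κ, 0). -/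
private lemma ceil_le_iff' (a : ℤ) (κ : ℕ) (k : ℤ) (hκ : 0 < κ) :
    ⌈((a:ℚ))/(κ:ℚ)⌉ ≤ k ↔ a ≤ k*κ := by
  rw [Int.ceil_le, div_le_iff₀ (by exact_mod_cast hκ)]
  exact_mod_cast Iff.rfl

private lemma le_floor_iff' (a : ℤ) (κ : ℕ) (k : ℤ) (hκ : 0 < κ) :
    k ≤ ⌊((a:ℚ))/(κ:ℚ)⌋ ↔ k*κ ≤ a := by
  rw [Int.le_floor, le_div_iff₀ (by exact_mod_cast hκ)]
  exact_mod_cast Iff.rfl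

private lemma fiberCard (m n : ℕ) (d : ℤ) :
    ((Finset.range n ×ˢ Finset.range m).filter (fun p => (p.1:ℤ) - p.2 = d)).card
      = (min (n:ℤ) (m+d) - max 0 d).toNat := by
  rw [← Int.card_Ico (max 0 d) (min (n:ℤ) (m+d))]
  apply Finset.card_bij' (fun p _ => (p.1:ℤ)) (fun x _ => (x.toNat, (x-d).toNat))
  · intro p hp
    simp only [Finset.mem_filter, Finset.mem_product, Finset.mem_range] at hp
    simp only [Finset.mem_Ico]
    omega
  · intro x hx
    simp only [Finset.mem_Ico] at hx
    simp only [Finset.mem_filter, Finset.mem_product, Finset.mem_range]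
    omega
  · intro p hp
    simp only [Finset.mem_filter, Finset.mem_product, Finset.mem_range] at hp
    ext <;> simp <;> omega
  · intro x hx
    simp only [Finset.mem_Ico] at hx
    simp only []
    omega

private lemma dvd_mul_iff_key (X s κ : ℕ) (hX : 0 < X) (hs : 0 < s)
    (hκ : κ = X / Nat.gcd s X) (a : ℤ) : (X:ℤ) ∣ a * s ↔ (κ:ℤ) ∣ a := by
  set g := Nat.gcd s X with hg
  have hg0 : 0 < g := Nat.gcd_pos_of_pos_right _ hX
  have hXg : X = g * κ := by rw [hκ]; exact (Nat.mul_div_cancel' (Nat.gcd_dvd_right s X)).symm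
  set s' := s / g with hs'
  have hsg : s = g * s' := (Nat.mul_div_cancel' (Nat.gcd_dvd_left s X)).symm
  have hcop : Nat.Coprime s' κ := by
    rw [hs', hκ]; exact Nat.coprime_div_gcd_div_gcd hg0
  have hcopZ : IsCoprime ((κ:ℤ)) ((s':ℤ)) :=
    Nat.isCoprime_iff_coprime.mpr hcop.symm
  constructor
  · intro h
    rw [hXg, hsg] at h
    push_cast at h
    have h2 : (κ:ℤ) ∣ a * s' := by
      have hgne : (g:ℤ) ≠ 0 := by exact_mod_cast hg0.ne'
      have : (g:ℤ) * (κ:ℤ) ∣ (g:ℤ) * (a * s') := by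
        convert h using 1; ring
      exact (mul_dvd_mul_iff_left hgne).mp this
    exact hcopZ.dvd_of_dvd_mul_right h2
  · intro h
    rw [hXg, hsg]
    push_cast
    obtain ⟨c, rfl⟩ := h
    exact ⟨c * s', by ring⟩

/-- Exact cover size of a thread-block anchored on a strided mask with
stride `X` and arbitrary positive stretch factor `s`, where
`κ = X / gcd(s, X)`, for `m ≥ n`. -/
theorem cover_card_strided_general
    (X s m n : ℕ) (hX : 0 < X) (hs : 0 < s) (hm : 0 < m) (hn : 0 < n) (hmn : n ≤ m)
    (κ : ℕ) (hκ : κ = X / Nat.gcd s X)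
    (x₀ y₀ : ℤ) (hanchor : (x₀, y₀) ∈ stridedMask X) :
    ((Comp x₀ y₀ (s : ℤ) m n ∩ stridedMask X).ncard : ℤ) =
      ⌈((m : ℚ) - n + 1) / κ⌉ * n
        + ∑ k ∈ Finset.Icc ⌈((m : ℚ) - n + 1) / κ⌉ ⌈((m : ℚ) - 1) / κ⌉,
            max ((m : ℤ) - k * κ) 0
        + ∑ k ∈ Finset.Icc (1 : ℤ) ⌈((n : ℚ) - 1) / κ⌉,
            max ((n : ℤ) - k * κ) 0 := by
  have hκ0 : 0 < κ := by
    rw [hκ]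
    exact Nat.div_pos (Nat.le_of_dvd hX (Nat.gcd_dvd_right s X)) (Nat.gcd_pos_of_pos_right _ hX)
  have hκZ : (0:ℤ) < κ := by exact_mod_cast hκ0
  -- canonical casts for the ceilings in the goal
  have e1 : ((m : ℚ) - n + 1) = (((m:ℤ) - n + 1 : ℤ) : ℚ) := by push_cast; ring
  have e2 : ((m : ℚ) - 1) = (((m:ℤ) - 1 : ℤ) : ℚ) := by push_cast; ring
  have e3 : ((n : ℚ) - 1) = (((n:ℤ) - 1 : ℤ) : ℚ) := by push_cast; ring
  rw [e1, e2, e3]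
  set K : ℤ := ⌈((((m:ℤ) - n + 1 : ℤ)):ℚ) / (κ:ℚ)⌉ with hK
  set Cm : ℤ := ⌈((((m:ℤ) - 1 : ℤ)):ℚ) / (κ:ℚ)⌉ with hCm
  set Cn : ℤ := ⌈((((n:ℤ) - 1 : ℤ)):ℚ) / (κ:ℚ)⌉ with hCn
  set Fm : ℤ := ⌊((((m:ℤ) - 1 : ℤ)):ℚ) / (κ:ℚ)⌋ with hFm
  set Fn : ℤ := ⌊((((n:ℤ) - 1 : ℤ)):ℚ) / (κ:ℚ)⌋ with hFn
  -- step A/B : LHS = card of a filtered finset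
  set T : Finset (ℕ × ℕ) :=
    (Finset.range n ×ˢ Finset.range m).filter (fun p => (κ:ℤ) ∣ (p.1:ℤ) - p.2) with hT
  set e : ℕ × ℕ → ℤ × ℤ := fun p => (x₀ + p.1 * s, y₀ + p.2 * s) with he
  have hanchor' : (X:ℤ) ∣ x₀ - y₀ := hanchor
  have hmem : ∀ i j : ℕ, ((X:ℤ) ∣ (x₀ + i*s) - (y₀ + j*s)) ↔ (κ:ℤ) ∣ (i:ℤ) - j := by
    intro i j
    have h1 : (x₀ + i*s) - (y₀ + j*s) = (x₀ - y₀) + ((i:ℤ)-j)*s := by ring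
    rw [h1, dvd_add_right hanchor', dvd_mul_iff_key X s κ hX hs hκ]
  have hset : Comp x₀ y₀ (s:ℤ) m n ∩ stridedMask X = ↑(T.image e) := by
    ext p
    simp only [Comp, stridedMask, Set.mem_inter_iff, Set.mem_setOf_eq, Finset.coe_image,
      Set.mem_image, Finset.mem_coe, hT, Finset.mem_filter, Finset.mem_product,
      Finset.mem_range, he]
    constructor
    · rintro ⟨⟨i, j, hi, hj, rfl⟩, hd⟩
      exact ⟨(i,j), ⟨⟨hi, hj⟩, (hmem i j).mp hd⟩, rfl⟩
    · rintro ⟨⟨i, j⟩, ⟨⟨hi, hj⟩, hd⟩, rfl⟩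
      exact ⟨⟨i, j, hi, hj, rfl⟩, (hmem i j).mpr hd⟩
  have hinj : Function.Injective e := by
    rintro ⟨i₁, j₁⟩ ⟨i₂, j₂⟩ hpe
    simp only [he, Prod.mk.injEq] at hpe
    have hsne : (s:ℤ) ≠ 0 := by exact_mod_cast hs.ne'
    obtain ⟨h1, h2⟩ := hpe
    have : (i₁:ℤ) = i₂ := by
      have := mul_right_cancel₀ hsne (by linarith : (i₁:ℤ) * s = i₂ * s); exact this
    have h1' : i₁ = i₂ := by exact_mod_cast this
    have : (j₁:ℤ) = j₂ := by
      have := mul_right_cancel₀ hsne (by linarith : (j₁:ℤ) * s = j₂ * s); exact this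
    have h2' : j₁ = j₂ := by exact_mod_cast this
    simp [h1', h2']
  rw [hset, Set.ncard_coe_finset, Finset.card_image_of_injective _ hinj]
  -- step C : fiberwise count
  set D : Finset ℤ := (Finset.Icc (1 - (m:ℤ)) ((n:ℤ) - 1)).filter (fun d => (κ:ℤ) ∣ d) with hD
  have hcards : T.card = ∑ d ∈ D, (T.filter (fun p => (p.1:ℤ) - p.2 = d)).card := by
    apply Finset.card_eq_sum_card_fiberwise
    intro p hp
    simp only [hT, Finset.mem_coe, Finset.mem_filter, Finset.mem_product, Finset.mem_range] at hp
    simp only [hD, Finset.mem_coe, Finset.mem_filter, Finset.mem_Icc]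
    refine ⟨⟨by omega, by omega⟩, hp.2⟩
  have hfib : ∀ d ∈ D, (T.filter (fun p => (p.1:ℤ) - p.2 = d)).card
      = (min (n:ℤ) (m+d) - max 0 d).toNat := by
    intro d hd
    simp only [hD, Finset.mem_filter, Finset.mem_Icc] at hd
    rw [← fiberCard m n d]
    congr 1
    rw [hT, Finset.filter_filter]
    apply Finset.filter_congr
    intro p hp
    constructor
    · rintro ⟨-, h⟩; exact h
    · intro h; exact ⟨h ▸ hd.2, h⟩
  rw [hcards]
  -- cast to ℤ
  rw [Finset.sum_congr rfl hfib, Nat.cast_sum]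
  have hGcast : ∀ d ∈ D, (((min (n:ℤ) (m+d) - max 0 d).toNat : ℤ)) = max (min (n:ℤ) (m+d) - max 0 d) 0 :=
    fun d _ => Int.toNat_eq_max _
  rw [Finset.sum_congr rfl hGcast]
  -- step E : reindex the multiples of κ
  have hDimg : D = (Finset.Icc (-Fm) Fn).image (fun k => k * (κ:ℤ)) := by
    ext d
    simp only [hD, Finset.mem_filter, Finset.mem_Icc, Finset.mem_image]
    constructor
    · rintro ⟨⟨h1, h2⟩, c, rfl⟩
      refine ⟨c, ⟨?_, ?_⟩, mul_comm c (κ:ℤ) ▸ rfl⟩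
      · have h3 : (-c) * (κ:ℤ) ≤ (m:ℤ) - 1 := by linarith
        have := (le_floor_iff' ((m:ℤ)-1) κ (-c) hκ0).mpr h3
        omega
      · have h4 : c * (κ:ℤ) ≤ (n:ℤ) - 1 := by linarith
        exact (le_floor_iff' ((n:ℤ)-1) κ c hκ0).mpr h4
    · rintro ⟨k, ⟨hk1, hk2⟩, rfl⟩
      have h3 := (le_floor_iff' ((n:ℤ)-1) κ k hκ0).mp hk2
      have h4 := (le_floor_iff' ((m:ℤ)-1) κ (-k) hκ0).mp (by omega : -k ≤ Fm)
      exact ⟨⟨by linarith, by linarith⟩, ⟨k, mul_comm k (κ:ℤ)⟩⟩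
  rw [hDimg, Finset.sum_image (fun a _ b _ h => mul_right_cancel₀ hκZ.ne' h)]
  -- basic facts about the ceiling/floor bounds
  have hnZ : (1:ℤ) ≤ n := by exact_mod_cast hn
  have hmnZ : (n:ℤ) ≤ m := by exact_mod_cast hmn
  have hFn0 : 0 ≤ Fn := (le_floor_iff' _ _ 0 hκ0).mpr (by simpa using by linarith)
  have hFm0 : 0 ≤ Fm := (le_floor_iff' _ _ 0 hκ0).mpr (by simpa using by linarith)
  have hK1 : 1 ≤ K := by
    by_contra h
    push_neg at h
    have := (ceil_le_iff' ((m:ℤ)-n+1) κ 0 hκ0).mp (by omega)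
    simp at this
    linarith
  have hKFm : K - 1 ≤ Fm := by
    have h1 : ¬ (K ≤ K - 1) := by omega
    rw [ceil_le_iff' _ _ _ hκ0] at h1
    push_neg at h1
    rw [le_floor_iff' _ _ _ hκ0]
    have h2 : (K-1) * (κ:ℤ) ≤ (m:ℤ) - n := by omega
    linarith
  have hFnCn : Fn ≤ Cn := Int.floor_le_ceil _
  have hFmCm : Fm ≤ Cm := Int.floor_le_ceil _
  -- split nonnegative / negative diagonals
  have hsplitset : Finset.Icc (-Fm) Fn = Finset.Icc (-Fm) (-1) ∪ Finset.Icc 0 Fn := by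
    ext k; simp only [Finset.mem_Icc, Finset.mem_union]; omega
  have hdisj : Disjoint (Finset.Icc (-Fm) (-1)) (Finset.Icc 0 Fn) := by
    rw [Finset.disjoint_left]
    intro k h1 h2
    simp only [Finset.mem_Icc] at h1 h2
    omega
  rw [hsplitset, Finset.sum_union hdisj]
  -- negative part
  have hA : ∑ k ∈ Finset.Icc (-Fm) (-1),
        max (min (n:ℤ) ((m:ℤ) + k*(κ:ℤ)) - max 0 (k*(κ:ℤ))) 0
      = (K-1)*n + ∑ k ∈ Finset.Icc K Cm, max ((m:ℤ) - k*(κ:ℤ)) 0 := by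
    have hneg : ∑ k ∈ Finset.Icc (-Fm) (-1),
          max (min (n:ℤ) ((m:ℤ) + k*(κ:ℤ)) - max 0 (k*(κ:ℤ))) 0
        = ∑ k ∈ Finset.Icc (1:ℤ) Fm, max (min (n:ℤ) ((m:ℤ) - k*(κ:ℤ))) 0 := by
      apply Finset.sum_nbij' (fun k => -k) (fun k => -k)
      · intro a ha; simp only [Finset.mem_Icc] at *; omega
      · intro a ha; simp only [Finset.mem_Icc] at *; omega
      · intro a _; ring
      · intro a _; ring
      · intro a ha
        simp only [Finset.mem_Icc] at ha
        have h1 : a * (κ:ℤ) ≤ 0 := by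
          have : a ≤ 0 := by omega
          exact mul_nonpos_of_nonpos_of_nonneg this hκZ.le
        rw [max_eq_left h1, sub_zero]
        congr 2
        ring
    rw [hneg]
    have hsplit2 : Finset.Icc (1:ℤ) Fm = Finset.Icc 1 (K-1) ∪ Finset.Icc K Fm := by
      ext k; simp only [Finset.mem_Icc, Finset.mem_union]; omega
    have hdisj2 : Disjoint (Finset.Icc (1:ℤ) (K-1)) (Finset.Icc K Fm) := by
      rw [Finset.disjoint_left]
      intro k h1 h2
      simp only [Finset.mem_Icc] at h1 h2
      omega
    rw [hsplit2, Finset.sum_union hdisj2]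
    congr 1
    · -- constant part
      have hc : ∀ k ∈ Finset.Icc (1:ℤ) (K-1),
          max (min (n:ℤ) ((m:ℤ) - k*(κ:ℤ))) 0 = (n:ℤ) := by
        intro k hk
        simp only [Finset.mem_Icc] at hk
        have h1 : ¬ (K ≤ k) := by omega
        rw [ceil_le_iff' _ _ _ hκ0] at h1
        push_neg at h1
        have h2 : (n:ℤ) ≤ (m:ℤ) - k*κ := by omega
        rw [min_eq_left h2, max_eq_left (by linarith)]
      rw [Finset.sum_congr rfl hc, Finset.sum_const, Int.card_Icc]
      rw [nsmul_eq_mul]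
      have : ((K - 1 + 1 - 1).toNat : ℤ) = K - 1 := by omega
      rw [this]
    · -- tail part
      have hc : ∀ k ∈ Finset.Icc K Fm,
          max (min (n:ℤ) ((m:ℤ) - k*(κ:ℤ))) 0 = max ((m:ℤ) - k*(κ:ℤ)) 0 := by
        intro k hk
        simp only [Finset.mem_Icc] at hk
        have h1 : K ≤ k := hk.1
        rw [ceil_le_iff' _ _ _ hκ0] at h1
        have h2 : (m:ℤ) - k*κ ≤ n := by omega
        rw [min_eq_right h2]
      rw [Finset.sum_congr rfl hc]
      apply Finset.sum_subset (Finset.Icc_subset_Icc_right hFmCm)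
      intro k hk hnk
      simp only [Finset.mem_Icc] at hk hnk
      have h1 : ¬ (k ≤ Fm) := by omega
      rw [le_floor_iff' _ _ _ hκ0] at h1
      push_neg at h1
      rw [max_eq_right (by omega)]
  -- nonnegative part
  have hB : ∑ k ∈ Finset.Icc (0:ℤ) Fn,
        max (min (n:ℤ) ((m:ℤ) + k*(κ:ℤ)) - max 0 (k*(κ:ℤ))) 0
      = (n:ℤ) + ∑ k ∈ Finset.Icc (1:ℤ) Cn, max ((n:ℤ) - k*(κ:ℤ)) 0 := by
    have hc : ∀ k ∈ Finset.Icc (0:ℤ) Fn,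
        max (min (n:ℤ) ((m:ℤ) + k*(κ:ℤ)) - max 0 (k*(κ:ℤ))) 0
          = max ((n:ℤ) - k*(κ:ℤ)) 0 := by
      intro k hk
      simp only [Finset.mem_Icc] at hk
      have h1 : 0 ≤ k*(κ:ℤ) := mul_nonneg hk.1 hκZ.le
      rw [max_eq_right h1, min_eq_left (by linarith)]
    rw [Finset.sum_congr rfl hc]
    have h0 : Finset.Icc (0:ℤ) Fn = insert 0 (Finset.Icc 1 Fn) := by
      ext k; simp only [Finset.mem_Icc, Finset.mem_insert]; omega
    rw [h0, Finset.sum_insert (by simp)]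
    congr 1
    · simp
    · apply Finset.sum_subset (Finset.Icc_subset_Icc_right hFnCn)
      intro k hk hnk
      simp only [Finset.mem_Icc] at hk hnk
      have h1 : ¬ (k ≤ Fn) := by omega
      rw [le_floor_iff' _ _ _ hκ0] at h1
      push_neg at h1
      rw [max_eq_right (by omega)]
  rw [hA, hB]
  ring
end

section
/- Let m, n, κ be positive integers with m ≥ n. Then the number of pairs (i, j) with 0 ≤ i < n, 0 ≤ j < m and κ dividing (j − i) equals ⌈(m−n+1)/κ⌉·n + Σ_{k=⌈(m−n+1)/κ⌉}^{⌈(m−1)/κ⌉} max(m − k·κ, 0) + Σ_{k=1}^{⌈(n−1)/κ⌉} max(n − k·κ, 0). -/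
open Finset

/-- Auxiliary: count of `j ∈ [0, m)` with `κ ∣ j - i`, for `i < m`. -/
lemma per_count (κ m i : ℕ) (hκ : 0 < κ) (him : i < m) :
    ((Finset.range m).filter (fun j : ℕ => (κ : ℤ) ∣ (j : ℤ) - (i : ℤ))).card
      = (m - 1 - i) / κ + 1 + i / κ := by
  have h1 : (Finset.range m).filter (fun j : ℕ => (κ : ℤ) ∣ (j : ℤ) - (i : ℤ))
      = (Finset.range m).filter (fun j : ℕ => j ≡ i [MOD κ]) := by
    apply Finset.filter_congr
    intro j _
    rw [Nat.modEq_iff_dvd]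
    exact dvd_sub_comm
  rw [h1, ← Nat.count_eq_card_filter_range, Nat.count_modEq_card m hκ i]
  -- now pure div/mod arithmetic
  set Q := m / κ with hQ
  set c := m % κ with hc'
  set q := i / κ with hq
  set r := i % κ with hr'
  have hm : κ * Q + c = m := Nat.div_add_mod m κ
  have hi : κ * q + r = i := Nat.div_add_mod i κ
  have hc : c < κ := Nat.mod_lt _ hκ
  have hr : r < κ := Nat.mod_lt _ hκ
  have hqQ : q ≤ Q := Nat.div_le_div_right him.le
  rcases lt_or_ge r c with h | h
  · have e1 : κ * (Q - q) + κ * q = κ * Q := by rw [← Nat.mul_add]; congr 1; omega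
    have e2 : m - 1 - i = κ * (Q - q) + (c - 1 - r) := by omega
    rw [e2, Nat.mul_add_div hκ, Nat.div_eq_of_lt (by omega)]
    have : r < c ↔ True := by simp [h]
    simp only [this, if_true]
    omega
  · have hqQ' : q < Q := by
      rcases Nat.lt_or_ge q Q with h' | h'
      · exact h'
      · exfalso; have hqe : q = Q := le_antisymm hqQ h'; rw [hqe] at hi; omega
    have e1 : κ * (Q - q - 1) + κ * q + κ = κ * Q := by
      have h2 : κ * (Q - q - 1) + κ * q + κ * 1 = κ * ((Q - q - 1) + q + 1) := by ring
      rw [Nat.mul_one] at h2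
      rw [h2]; congr 1; omega
    have e2 : m - 1 - i = κ * (Q - q - 1) + (κ + c - 1 - r) := by omega
    rw [e2, Nat.mul_add_div hκ, Nat.div_eq_of_lt (by omega)]
    have : ¬ (r < c) := by omega
    simp only [this, if_false]
    omega

/-- Auxiliary: sums of truncated linear terms can be shrunk when the tail vanishes. -/
lemma sum_max_shrink (κ' T a X Y : ℤ) (hXY : X ≤ Y)
    (h : ∀ k : ℤ, X < k → T ≤ k * κ') :
    ∑ k ∈ Finset.Icc a Y, max (T - k * κ') 0 = ∑ k ∈ Finset.Icc a X, max (T - k * κ') 0 := by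
  symm
  apply Finset.sum_subset (Finset.Icc_subset_Icc_right hXY)
  intro k hk hnk
  simp only [Finset.mem_Icc] at hk hnk
  have hXk : X < k := by omega
  have := h k hXk
  exact max_eq_right (by omega)

/-- Key identity: `∑_{i<N} ⌊i/κ⌋ = ∑_{k=1}^{N} (N - kκ)⁺`. -/
lemma sumdiv (κ : ℕ) (hκ : 0 < κ) (N : ℕ) :
    ((∑ i ∈ Finset.range N, i / κ : ℕ) : ℤ)
      = ∑ k ∈ Finset.Icc (1 : ℤ) (N : ℤ), max ((N : ℤ) - k * κ) 0 := by
  induction N with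
  | zero => simp
  | succ N ih =>
    have hins : Finset.Icc (1 : ℤ) ((N : ℤ) + 1)
        = insert ((N : ℤ) + 1) (Finset.Icc (1 : ℤ) (N : ℤ)) := by
      ext k; simp [Finset.mem_Icc]; omega
    have hNc : ((N + 1 : ℕ) : ℤ) = (N : ℤ) + 1 := by push_cast; ring
    rw [Finset.sum_range_succ, Nat.cast_add, ih, hNc, hins,
      Finset.sum_insert (by simp)]
    have htop : max ((N : ℤ) + 1 - ((N : ℤ) + 1) * κ) 0 = 0 := by
      have h1 : (N : ℤ) + 1 ≤ ((N : ℤ) + 1) * κ := by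
        nlinarith [Int.toNat_of_nonneg (a := (κ : ℤ)), (by exact_mod_cast hκ : (0:ℤ) < κ),
          (by positivity : (0:ℤ) ≤ (N:ℤ))]
      exact max_eq_right (by omega)
    rw [htop, zero_add]
    have hsplit : ∑ k ∈ Finset.Icc (1 : ℤ) (N : ℤ), max ((N : ℤ) + 1 - k * κ) 0
        = ∑ k ∈ Finset.Icc (1 : ℤ) (N : ℤ),
            (max ((N : ℤ) - k * κ) 0 + if k * κ ≤ (N : ℤ) then 1 else 0) := by
      apply Finset.sum_congr rfl
      intro k hk
      split_ifs with h <;> omega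
    rw [hsplit, Finset.sum_add_distrib, Finset.sum_boole]
    have hfil : {k ∈ Finset.Icc (1 : ℤ) (N : ℤ) | k * κ ≤ (N : ℤ)}
        = Finset.Icc (1 : ℤ) ((N / κ : ℕ) : ℤ) := by
      ext k
      simp only [Finset.mem_filter, Finset.mem_Icc]
      have hdiv : ((N / κ : ℕ) : ℤ) = (N : ℤ) / (κ : ℤ) := Int.natCast_div N κ
      have hκ' : (0 : ℤ) < κ := by exact_mod_cast hκ
      rw [hdiv]
      constructor
      · rintro ⟨⟨h1, _⟩, h3⟩
        exact ⟨h1, (Int.le_ediv_iff_mul_le hκ').mpr h3⟩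
      · rintro ⟨h1, h2⟩
        have h3 : k * κ ≤ N := (Int.le_ediv_iff_mul_le hκ').mp h2
        have h4 : (N : ℤ) / κ ≤ N := Int.ediv_le_self _ (by positivity)
        exact ⟨⟨h1, le_trans h2 h4⟩, h3⟩
    rw [hfil, Int.card_Icc]
    have : (((N / κ : ℕ) : ℤ) + 1 - 1).toNat = N / κ := by
      rw [add_sub_cancel_right, Int.toNat_natCast]
    rw [this]

lemma sumdiv' (κ : ℕ) (hκ : 0 < κ) (N : ℕ) :
    (∑ i ∈ Finset.range N, ((i : ℤ) / (κ : ℤ)))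
      = ∑ k ∈ Finset.Icc (1 : ℤ) (N : ℤ), max ((N : ℤ) - k * κ) 0 := by
  rw [← sumdiv κ hκ N]
  push_cast
  rfl

set_option maxHeartbeats 1600000 in
/-- The number of pairs `(i, j)` with `0 ≤ i < n`, `0 ≤ j < m` and
`κ ∣ (j − i)` (over ℤ) equals the closed-form expression. -/
theorem count_divisible_pairs
    (m n κ : ℕ) (hm : 0 < m) (hn : 0 < n) (hκ : 0 < κ) (hmn : n ≤ m) :
    ((((Finset.range n) ×ˢ (Finset.range m)).filter
        (fun p => (κ : ℤ) ∣ ((p.2 : ℤ) - (p.1 : ℤ)))).card : ℤ) =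
      ⌈((m : ℚ) - n + 1) / κ⌉ * n
        + ∑ k ∈ Finset.Icc ⌈((m : ℚ) - n + 1) / κ⌉ ⌈((m : ℚ) - 1) / κ⌉,
            max ((m : ℤ) - k * κ) 0
        + ∑ k ∈ Finset.Icc (1 : ℤ) ⌈((n : ℚ) - 1) / κ⌉,
            max ((n : ℤ) - k * κ) 0 := by
  have hκQ : (0 : ℚ) < κ := by exact_mod_cast hκ
  have hκQ1 : (1 : ℚ) ≤ κ := by exact_mod_cast hκ
  have hκZ : (0 : ℤ) < κ := by exact_mod_cast hκ
  have hmnQ : (n : ℚ) ≤ m := by exact_mod_cast hmn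
  have hnQ : (1 : ℚ) ≤ n := by exact_mod_cast hn
  have hmQ : (1 : ℚ) ≤ m := by exact_mod_cast hm
  set A := ⌈((m : ℚ) - n + 1) / κ⌉ with hA
  set B := ⌈((m : ℚ) - 1) / κ⌉ with hB
  set C := ⌈((n : ℚ) - 1) / κ⌉ with hC
  -- Step 1: the cardinality as a ℕ sum
  have hcard : (((Finset.range n) ×ˢ (Finset.range m)).filter
        (fun p => (κ : ℤ) ∣ ((p.2 : ℤ) - (p.1 : ℤ)))).card
      = ∑ i ∈ Finset.range n, ((m - 1 - i) / κ + 1 + i / κ) := by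
    rw [Finset.card_filter, Finset.sum_product]
    refine Finset.sum_congr rfl fun i hi => ?_
    rw [← Finset.card_filter]
    exact per_count κ m i hκ (lt_of_lt_of_le (Finset.mem_range.mp hi) hmn)
  -- Step 2: split and reindex to F's
  have hsplit : ∑ i ∈ Finset.range n, ((m - 1 - i) / κ + 1 + i / κ)
      = (∑ i ∈ Finset.range n, (m - 1 - i) / κ) + n + ∑ i ∈ Finset.range n, i / κ := by
    rw [Finset.sum_add_distrib, Finset.sum_add_distrib, Finset.sum_const, smul_eq_mul, mul_one, Finset.card_range]
  have hreflect : ∑ i ∈ Finset.range n, (m - 1 - i) / κ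
      = ∑ i ∈ Finset.range n, (m - n + i) / κ := by
    rw [← Finset.sum_range_reflect (fun i => (m - n + i) / κ) n]
    refine Finset.sum_congr rfl fun j hj => ?_
    have := Finset.mem_range.mp hj
    congr 1
    omega
  have hFm : ∑ i ∈ Finset.range m, i / κ
      = (∑ i ∈ Finset.range (m - n), i / κ) + ∑ i ∈ Finset.range n, (m - n + i) / κ := by
    rw [Finset.range_eq_Ico, ← Finset.sum_Ico_consecutive _ (Nat.zero_le (m - n)) (Nat.sub_le m n),
      ← Finset.range_eq_Ico, Finset.sum_Ico_eq_sum_range]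
    congr 1
    rw [show m - (m - n) = n from by omega]
  -- combine: card + F(m-n) = F(m) + n + F(n) over ℕ
  have hnat : (((Finset.range n) ×ˢ (Finset.range m)).filter
        (fun p => (κ : ℤ) ∣ ((p.2 : ℤ) - (p.1 : ℤ)))).card
        + ∑ i ∈ Finset.range (m - n), i / κ
      = (∑ i ∈ Finset.range m, i / κ) + n + ∑ i ∈ Finset.range n, i / κ := by
    rw [hcard, hsplit, hreflect, hFm]; ring
  -- cast to ℤ, apply sumdiv
  have hZ : (((((Finset.range n) ×ˢ (Finset.range m)).filter
        (fun p => (κ : ℤ) ∣ ((p.2 : ℤ) - (p.1 : ℤ)))).card : ℤ))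
      = (∑ k ∈ Finset.Icc (1 : ℤ) (m : ℤ), max ((m : ℤ) - k * κ) 0)
        - (∑ k ∈ Finset.Icc (1 : ℤ) ((m : ℤ) - n), max (((m : ℤ) - n) - k * κ) 0)
        + n + ∑ k ∈ Finset.Icc (1 : ℤ) (n : ℤ), max ((n : ℤ) - k * κ) 0 := by
    have h1 := sumdiv' κ hκ m
    have h2 := sumdiv' κ hκ (m - n)
    have h3 := sumdiv' κ hκ n
    have hsub : ((m - n : ℕ) : ℤ) = (m : ℤ) - n := by
      push_cast [hmn]; ring
    rw [hsub] at h2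
    have := congrArg (fun x : ℕ => (x : ℤ)) hnat
    push_cast at this
    rw [h1, h2, h3] at this
    linarith
  rw [hZ]
  -- ceiling facts
  have hA1 : 1 ≤ A := by
    rw [hA]
    apply Int.ceil_pos.mpr
    apply div_pos _ hκQ
    linarith
  have hAm : A ≤ (m : ℤ) := by
    rw [hA]
    apply Int.ceil_le.mpr
    push_cast
    have h1 : ((m : ℚ) - n + 1) / κ ≤ (m : ℚ) - n + 1 := div_le_self (by linarith) hκQ1
    linarith
  have hAκ : (m : ℤ) - n + 1 ≤ A * κ := by
    have h1 : ((m : ℚ) - n + 1) / κ ≤ (A : ℚ) := Int.le_ceil _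
    have h2 : (m : ℚ) - n + 1 ≤ (A : ℚ) * κ := (div_le_iff₀ hκQ).mp h1
    exact_mod_cast h2
  have hkA : ∀ k : ℤ, k < A → k * κ ≤ (m : ℤ) - n := by
    intro k hk
    have h1 : (k : ℚ) < ((m : ℚ) - n + 1) / κ := Int.lt_ceil.mp hk
    have h2 : (k : ℚ) * κ < (m : ℚ) - n + 1 := (lt_div_iff₀ hκQ).mp h1
    have h3 : (k : ℤ) * κ < (m : ℤ) - n + 1 := by exact_mod_cast h2
    omega
  have hBm : B ≤ (m : ℤ) := by
    rw [hB]
    apply Int.ceil_le.mpr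
    push_cast
    have h1 : ((m : ℚ) - 1) / κ ≤ (m : ℚ) - 1 := div_le_self (by linarith) hκQ1
    linarith
  have hkB : ∀ k : ℤ, B < k → (m : ℤ) ≤ k * κ := by
    intro k hk
    have h1 : ((m : ℚ) - 1) / κ < (k : ℚ) := by
      calc ((m : ℚ) - 1) / κ ≤ (B : ℚ) := Int.le_ceil _
        _ < (k : ℚ) := by exact_mod_cast hk
    have h2 : (m : ℚ) - 1 < (k : ℚ) * κ := (div_lt_iff₀ hκQ).mp h1
    have h3 : (m : ℤ) - 1 < k * κ := by exact_mod_cast h2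
    omega
  have hCn : C ≤ (n : ℤ) := by
    rw [hC]
    apply Int.ceil_le.mpr
    push_cast
    have h1 : ((n : ℚ) - 1) / κ ≤ (n : ℚ) - 1 := div_le_self (by linarith) hκQ1
    linarith
  have hkC : ∀ k : ℤ, C < k → (n : ℤ) ≤ k * κ := by
    intro k hk
    have h1 : ((n : ℚ) - 1) / κ < (k : ℚ) := by
      calc ((n : ℚ) - 1) / κ ≤ (C : ℚ) := Int.le_ceil _
        _ < (k : ℚ) := by exact_mod_cast hk
    have h2 : (n : ℚ) - 1 < (k : ℚ) * κ := (div_lt_iff₀ hκQ).mp h1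
    have h3 : (n : ℤ) - 1 < k * κ := by exact_mod_cast h2
    omega
  -- third sum: G n = S_C
  have h3rd : ∑ k ∈ Finset.Icc (1 : ℤ) (n : ℤ), max ((n : ℤ) - k * κ) 0
      = ∑ k ∈ Finset.Icc (1 : ℤ) C, max ((n : ℤ) - k * κ) 0 :=
    sum_max_shrink (κ : ℤ) (n : ℤ) 1 C (n : ℤ) hCn hkC
  -- middle sum: S_AB = S_Am
  have hmid : ∑ k ∈ Finset.Icc A (m : ℤ), max ((m : ℤ) - k * κ) 0
      = ∑ k ∈ Finset.Icc A B, max ((m : ℤ) - k * κ) 0 :=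
    sum_max_shrink (κ : ℤ) (m : ℤ) A B (m : ℤ) hBm hkB
  -- split G m at A
  have hIcc1 : ∀ X : ℤ, Finset.Icc (1 : ℤ) X = Finset.Ioc 0 X := by
    intro X; ext k; simp [Finset.mem_Icc, Finset.mem_Ioc]; omega
  have hIccA : Finset.Icc A (m : ℤ) = Finset.Ioc (A - 1) (m : ℤ) := by
    ext k; simp [Finset.mem_Icc, Finset.mem_Ioc]
  have hGm : ∑ k ∈ Finset.Icc (1 : ℤ) (m : ℤ), max ((m : ℤ) - k * κ) 0
      = (∑ k ∈ Finset.Icc (1 : ℤ) (A - 1), max ((m : ℤ) - k * κ) 0)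
        + ∑ k ∈ Finset.Icc A (m : ℤ), max ((m : ℤ) - k * κ) 0 := by
    rw [hIcc1, hIcc1, hIccA]
    rw [← Finset.Ioc_union_Ioc_eq_Ioc (by omega : (0:ℤ) ≤ A - 1) (by omega : A - 1 ≤ (m:ℤ)),
      Finset.sum_union]
    apply Finset.disjoint_left.mpr
    intro x hx hx'
    simp only [Finset.mem_Ioc] at hx hx'
    omega
  -- step 4: the head of G m
  have hhead : ∑ k ∈ Finset.Icc (1 : ℤ) (A - 1), max ((m : ℤ) - k * κ) 0
      = (∑ k ∈ Finset.Icc (1 : ℤ) (A - 1), max (((m : ℤ) - n) - k * κ) 0) + (A - 1) * n := by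
    have hterm : ∀ k ∈ Finset.Icc (1 : ℤ) (A - 1),
        max ((m : ℤ) - k * κ) 0 = max (((m : ℤ) - n) - k * κ) 0 + n := by
      intro k hk
      simp only [Finset.mem_Icc] at hk
      have h1 : k * κ ≤ (m : ℤ) - n := hkA k (by omega)
      have hn' : (0 : ℤ) ≤ n := by positivity
      omega
    rw [Finset.sum_congr rfl hterm, Finset.sum_add_distrib, Finset.sum_const, Int.card_Icc]
    have : ((A - 1 + 1 - 1).toNat : ℤ) = A - 1 := by
      rw [show A - 1 + 1 - 1 = A - 1 from by ring]
      exact Int.toNat_of_nonneg (by omega)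
    rw [nsmul_eq_mul, this]
  -- step 5: head sum equals G(m-n)
  have hmnZ : (0 : ℤ) ≤ (m : ℤ) - n := by
    have : (n : ℤ) ≤ m := by exact_mod_cast hmn
    omega
  have hheadG : ∑ k ∈ Finset.Icc (1 : ℤ) (A - 1), max (((m : ℤ) - n) - k * κ) 0
      = ∑ k ∈ Finset.Icc (1 : ℤ) ((m : ℤ) - n), max (((m : ℤ) - n) - k * κ) 0 := by
    rcases le_total (A - 1) ((m : ℤ) - n) with h | h
    · symm
      apply sum_max_shrink (κ : ℤ) ((m : ℤ) - n) 1 (A - 1) ((m : ℤ) - n) h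
      intro k hk
      have h1 : A ≤ k := by omega
      have h2 : A * κ ≤ k * κ := mul_le_mul_of_nonneg_right h1 (by omega)
      omega
    · apply sum_max_shrink (κ : ℤ) ((m : ℤ) - n) 1 ((m : ℤ) - n) (A - 1) h
      intro k hk
      have h1 : k ≤ k * κ := le_mul_of_one_le_right (by omega) (by omega)
      omega
  rw [h3rd, hGm, hmid, hhead, hheadG]
  ring
end

section
/- Let X, m, n be positive integers and let P_X be the strided mask with stride X. Let TB₁ and TB₂ be thread-blocks of size m×n with anchors in P_X and stretch factors s₁ and s₂ respectively (positive integers). If gcd(s₁, X) ≤ gcd(s₂, X), then |Cov(TB₁)| ≤ |Cov(TB₂)|; that is, the cover of a thread-block anchored on a strided mask is monotonically non-decreasing in gcd(s, X). -/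
/-- Index set: pairs `(i,j)` with `i < n`, `j < m`, `d ∣ i - j`. -/
def idxSet (d m n : ℕ) : Finset (ℕ × ℕ) :=
  (Finset.range n ×ˢ Finset.range m).filter (fun p => (d : ℤ) ∣ ((p.1 : ℤ) - p.2))

lemma mem_idxSet {d m n : ℕ} {p : ℕ × ℕ} :
    p ∈ idxSet d m n ↔ p.1 < n ∧ p.2 < m ∧ (d : ℤ) ∣ ((p.1 : ℤ) - p.2) := by
  simp [idxSet, Finset.mem_filter, Finset.mem_product, and_assoc]

lemma dvd_aux (s X : ℕ) (hs : 0 < s) (hX : 0 < X) (k : ℤ) :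
    (X : ℤ) ∣ k * s ↔ ((X / Nat.gcd s X : ℕ) : ℤ) ∣ k := by
  set g := Nat.gcd s X with hg
  have hgpos : 0 < g := Nat.gcd_pos_of_pos_left X hs
  have hXe : (X / g) * g = X := Nat.div_mul_cancel (Nat.gcd_dvd_right s X)
  have hse : (s / g) * g = s := Nat.div_mul_cancel (Nat.gcd_dvd_left s X)
  have hcop : Nat.Coprime (X / g) (s / g) :=
    (Nat.coprime_div_gcd_div_gcd hgpos).symm
  have hcopZ : IsCoprime ((X / g : ℕ) : ℤ) ((s / g : ℕ) : ℤ) := by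
    rw [Int.isCoprime_iff_gcd_eq_one]
    exact (Int.gcd_natCast_natCast _ _).trans hcop
  have hXZ : ((X / g : ℕ) : ℤ) * g = (X : ℤ) := by exact_mod_cast hXe
  have hsZ : ((s / g : ℕ) : ℤ) * g = (s : ℤ) := by exact_mod_cast hse
  have hgne : (g : ℤ) ≠ 0 := by exact_mod_cast hgpos.ne'
  constructor
  · intro h
    have h' : ((X / g : ℕ) : ℤ) * g ∣ (k * (s / g : ℕ)) * g := by
      rw [hXZ, mul_assoc, hsZ]; exact h
    exact hcopZ.dvd_of_dvd_mul_right ((mul_dvd_mul_iff_right hgne).mp h')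
  · intro h
    rw [← hXZ, ← hsZ, ← mul_assoc]
    exact mul_dvd_mul (h.trans (dvd_mul_right _ _)) dvd_rfl

lemma cov_card (X : ℕ) (hX : 0 < X) (m n s : ℕ) (hs : 0 < s)
    (x y : ℤ) (hanch : (X : ℤ) ∣ x - y) :
    (Comp x y (s : ℤ) m n ∩ stridedMask X).ncard
      = (idxSet (X / Nat.gcd s X) m n).card := by
  set d := X / Nat.gcd s X with hd
  set f : ℕ × ℕ → ℤ × ℤ := fun p => (x + p.1 * s, y + p.2 * s) with hf
  have hset : Comp x y (s : ℤ) m n ∩ stridedMask X = ↑((idxSet d m n).image f) := by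
    ext p
    simp only [Set.mem_inter_iff, Comp, stridedMask, Set.mem_setOf_eq,
      Finset.coe_image, Set.mem_image, Finset.mem_coe]
    constructor
    · rintro ⟨⟨i, j, hi, hj, rfl⟩, hmask⟩
      refine ⟨(i, j), ?_, rfl⟩
      rw [mem_idxSet]
      refine ⟨hi, hj, ?_⟩
      have h1 : (X : ℤ) ∣ ((i : ℤ) - j) * s := by
        have h2 := dvd_sub hmask hanch
        have heq : (x + i * s - (y + j * s)) - (x - y) = ((i : ℤ) - j) * s := by ring
        rwa [heq] at h2
      exact (dvd_aux s X hs hX _).mp h1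
    · rintro ⟨⟨i, j⟩, hmem, rfl⟩
      rw [mem_idxSet] at hmem
      obtain ⟨hi, hj, hdvd⟩ := hmem
      refine ⟨⟨i, j, hi, hj, rfl⟩, ?_⟩
      have h1 : (X : ℤ) ∣ ((i : ℤ) - j) * s := (dvd_aux s X hs hX _).mpr hdvd
      have heq : (x + i * s) - (y + j * s) = (x - y) + ((i : ℤ) - j) * s := by ring
      simp only [hf]
      rw [heq]
      exact dvd_add hanch h1
  rw [hset, Set.ncard_coe_finset]
  apply Finset.card_image_of_injOn
  intro a _ b _ hab
  have h1 : x + (a.1 : ℤ) * s = x + b.1 * s := congrArg Prod.fst hab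
  have h2 : y + (a.2 : ℤ) * s = y + b.2 * s := congrArg Prod.snd hab
  have hsne : (s : ℤ) ≠ 0 := by exact_mod_cast hs.ne'
  have e1 : (a.1 : ℤ) = b.1 := mul_right_cancel₀ hsne (by linarith)
  have e2 : (a.2 : ℤ) = b.2 := mul_right_cancel₀ hsne (by linarith)
  exact Prod.ext (by exact_mod_cast e1) (by exact_mod_cast e2)

lemma nat_dvd_of_int (d i j : ℕ) (h : j ≤ i) (hdvd : (d : ℤ) ∣ ((i : ℤ) - j)) :
    d ∣ i - j := by
  have : ((i - j : ℕ) : ℤ) = (i : ℤ) - j := by exact_mod_cast Int.ofNat_sub h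
  exact_mod_cast (by rwa [this] : (d : ℤ) ∣ ((i - j : ℕ) : ℤ))

lemma idx_mono (m n d₁ d₂ : ℕ) (h2 : 0 < d₂) (hle : d₂ ≤ d₁) :
    (idxSet d₁ m n).card ≤ (idxSet d₂ m n).card := by
  have h1 : 0 < d₁ := lt_of_lt_of_le h2 hle
  set F : ℕ × ℕ → ℕ × ℕ := fun p =>
    if p.2 ≤ p.1 then (p.2 + (p.1 - p.2) / d₁ * d₂, p.2)
    else (p.1, p.1 + (p.2 - p.1) / d₁ * d₂) with hF
  apply Finset.card_le_card_of_injOn F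
  · -- maps into idxSet d₂
    intro p hp
    rw [Finset.mem_coe, mem_idxSet] at hp
    obtain ⟨hi, hj, hdvd⟩ := hp
    rw [Finset.mem_coe, mem_idxSet]
    rcases le_or_gt p.2 p.1 with h | h
    · have hnd : d₁ ∣ p.1 - p.2 := nat_dvd_of_int _ _ _ h hdvd
      have hte : (p.1 - p.2) / d₁ * d₁ = p.1 - p.2 := Nat.div_mul_cancel hnd
      simp only [hF, if_pos h]
      refine ⟨?_, hj, ?_⟩
      · have : (p.1 - p.2) / d₁ * d₂ ≤ (p.1 - p.2) / d₁ * d₁ :=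
          Nat.mul_le_mul_left _ hle
        omega
      · exact ⟨(((p.1 - p.2) / d₁ : ℕ) : ℤ), by push_cast; ring⟩
    · have hnd : d₁ ∣ p.2 - p.1 := by
        apply nat_dvd_of_int _ _ _ h.le
        have := (dvd_neg (α := ℤ)).mpr hdvd
        rwa [neg_sub] at this
      have hte : (p.2 - p.1) / d₁ * d₁ = p.2 - p.1 := Nat.div_mul_cancel hnd
      simp only [hF, if_neg (not_le.mpr h)]
      refine ⟨hi, ?_, ?_⟩
      · have : (p.2 - p.1) / d₁ * d₂ ≤ (p.2 - p.1) / d₁ * d₁ :=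
          Nat.mul_le_mul_left _ hle
        omega
      · exact ⟨-(((p.2 - p.1) / d₁ : ℕ) : ℤ), by push_cast; ring⟩
  · -- injective on idxSet d₁
    intro a ha b hb hab
    simp only [Finset.mem_coe, mem_idxSet] at ha hb
    rcases le_or_gt a.2 a.1 with h | h <;> rcases le_or_gt b.2 b.1 with h' | h'
    · simp only [hF, if_pos h, if_pos h', Prod.mk.injEq] at hab
      obtain ⟨e1, e2⟩ := hab
      have hnda : d₁ ∣ a.1 - a.2 := nat_dvd_of_int _ _ _ h ha.2.2
      have hndb : d₁ ∣ b.1 - b.2 := nat_dvd_of_int _ _ _ h' hb.2.2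
      have hta : (a.1 - a.2) / d₁ * d₁ = a.1 - a.2 := Nat.div_mul_cancel hnda
      have htb : (b.1 - b.2) / d₁ * d₁ = b.1 - b.2 := Nat.div_mul_cancel hndb
      have ht : (a.1 - a.2) / d₁ = (b.1 - b.2) / d₁ := by
        have := Nat.eq_of_mul_eq_mul_right h2 (by omega :
          (a.1 - a.2) / d₁ * d₂ = (b.1 - b.2) / d₁ * d₂)
        exact this
      have : a.1 - a.2 = b.1 - b.2 := by rw [← hta, ← htb, ht]
      have : a.1 = b.1 := by omega
      exact Prod.ext this (by omega)
    · exfalso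
      simp only [hF, if_pos h, if_neg (not_le.mpr h'), Prod.mk.injEq] at hab
      obtain ⟨e1, e2⟩ := hab
      have hndb : d₁ ∣ b.2 - b.1 := by
        apply nat_dvd_of_int _ _ _ h'.le
        have := (dvd_neg (α := ℤ)).mpr hb.2.2
        rwa [neg_sub] at this
      have htb : (b.2 - b.1) / d₁ * d₁ = b.2 - b.1 := Nat.div_mul_cancel hndb
      have hbpos : 0 < (b.2 - b.1) / d₁ := by
        rcases Nat.eq_zero_or_pos ((b.2 - b.1) / d₁) with hz | hz
        · rw [hz] at htb; omega
        · exact hz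
      have : 0 < (b.2 - b.1) / d₁ * d₂ := Nat.mul_pos hbpos h2
      omega
    · exfalso
      simp only [hF, if_neg (not_le.mpr h), if_pos h', Prod.mk.injEq] at hab
      obtain ⟨e1, e2⟩ := hab
      have hnda : d₁ ∣ a.2 - a.1 := by
        apply nat_dvd_of_int _ _ _ h.le
        have := (dvd_neg (α := ℤ)).mpr ha.2.2
        rwa [neg_sub] at this
      have hta : (a.2 - a.1) / d₁ * d₁ = a.2 - a.1 := Nat.div_mul_cancel hnda
      have hapos : 0 < (a.2 - a.1) / d₁ := by
        rcases Nat.eq_zero_or_pos ((a.2 - a.1) / d₁) with hz | hz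
        · rw [hz] at hta; omega
        · exact hz
      have : 0 < (a.2 - a.1) / d₁ * d₂ := Nat.mul_pos hapos h2
      omega
    · simp only [hF, if_neg (not_le.mpr h), if_neg (not_le.mpr h'), Prod.mk.injEq] at hab
      obtain ⟨e1, e2⟩ := hab
      have hnda : d₁ ∣ a.2 - a.1 := by
        apply nat_dvd_of_int _ _ _ h.le
        have := (dvd_neg (α := ℤ)).mpr ha.2.2
        rwa [neg_sub] at this
      have hndb : d₁ ∣ b.2 - b.1 := by
        apply nat_dvd_of_int _ _ _ h'.le
        have := (dvd_neg (α := ℤ)).mpr hb.2.2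
        rwa [neg_sub] at this
      have hta : (a.2 - a.1) / d₁ * d₁ = a.2 - a.1 := Nat.div_mul_cancel hnda
      have htb : (b.2 - b.1) / d₁ * d₁ = b.2 - b.1 := Nat.div_mul_cancel hndb
      have ht : (a.2 - a.1) / d₁ = (b.2 - b.1) / d₁ :=
        Nat.eq_of_mul_eq_mul_right h2 (by omega)
      have : a.2 - a.1 = b.2 - b.1 := by rw [← hta, ← htb, ht]
      exact Prod.ext e1 (by omega)

/-- The cover of a thread-block anchored on a strided mask is monotonically
non-decreasing in `gcd(s, X)`. -/
theorem cover_mono_gcd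
    (X m n : ℕ) (hX : 0 < X) (hm : 0 < m) (hn : 0 < n)
    (s₁ s₂ : ℕ) (hs₁ : 0 < s₁) (hs₂ : 0 < s₂)
    (x₁ y₁ x₂ y₂ : ℤ)
    (hanch₁ : (x₁, y₁) ∈ stridedMask X) (hanch₂ : (x₂, y₂) ∈ stridedMask X)
    (hgcd : Nat.gcd s₁ X ≤ Nat.gcd s₂ X) :
    (Comp x₁ y₁ (s₁ : ℤ) m n ∩ stridedMask X).ncard ≤
      (Comp x₂ y₂ (s₂ : ℤ) m n ∩ stridedMask X).ncard := by
  rw [cov_card X hX m n s₁ hs₁ x₁ y₁ hanch₁, cov_card X hX m n s₂ hs₂ x₂ y₂ hanch₂]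
  apply idx_mono
  · exact Nat.div_pos (Nat.le_of_dvd hX (Nat.gcd_dvd_right s₂ X))
      (Nat.gcd_pos_of_pos_left X hs₂)
  · exact Nat.div_le_div_left hgcd (Nat.gcd_pos_of_pos_left X hs₁)
end

section
/- Let r, l, h, m, n be positive integers and l' a natural number. Let κ = gcd(m, h), τ_m = m/κ, τ_h = h/κ, and write τ_m = α·τ_h + β with 0 ≤ β < τ_h. Assume τ_m divides r, and let K = r·τ_h/τ_m (so the K patches of height m exactly cover the r·h rows of the structured dense polygon with parameters (r, l, h, l')). Define λ_naive = Σ_{i=0}^{K−1} ⌈w_i/n⌉. Then λ_naive = (r/τ_m)·(τ_h·⌈(l + (α−1)·l')/n⌉) if β = 0, and λ_naive = (r/τ_m)·((β−1)·⌈(l + (α+1)·l')/n⌉ + (τ_h − β + 1)·⌈(l + α·l')/n⌉) if β ≠ 0. -/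
/-- The number of height-`h` slabs that patch `i` (rows `i·m, …, (i+1)·m − 1`)
overlaps: `t_i = ⌊((i+1)·m − 1)/h⌋ − ⌊i·m/h⌋ + 1`. -/
def tslab (m h : ℕ) (i : ℕ) : ℤ :=
  ⌊((((i : ℤ) + 1) * m - 1 : ℤ) : ℚ) / (h : ℚ)⌋ - ⌊(((i : ℤ) * m : ℤ) : ℚ) / (h : ℚ)⌋ + 1

/-- The width of patch `i`: `w_i = l + (t_i − 1)·l'`. -/
def wpatch (m h l l' : ℕ) (i : ℕ) : ℤ :=
  (l : ℤ) + (tslab m h i - 1) * l'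

private lemma ediv_kappa (a b κ : ℤ) (hb : 0 < b) (hκ : 0 < κ) :
    (a * κ - 1) / (b * κ) = (a - 1) / b := by
  have h := Int.mul_ediv_add_emod (a - 1) b
  have hr0 : 0 ≤ (a - 1) % b := Int.emod_nonneg _ hb.ne'
  have hrb : (a - 1) % b < b := Int.emod_lt_of_pos _ hb
  have key : a * κ - 1 = ((a - 1) % b * κ + (κ - 1)) + ((a - 1) / b) * (b * κ) := by
    linear_combination κ * h.symm
  rw [key, Int.add_mul_ediv_right _ _ (by positivity : (b * κ) ≠ 0),
    Int.ediv_eq_zero_of_lt (by nlinarith) (by nlinarith), zero_add]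

private lemma ediv_sub_one_of_not_dvd (x b : ℤ) (hb : 0 < b) (hnd : ¬ b ∣ x) :
    (x - 1) / b = x / b := by
  have h := Int.mul_ediv_add_emod x b
  have hr0 : 0 ≤ x % b := Int.emod_nonneg _ hb.ne'
  have hrb : x % b < b := Int.emod_lt_of_pos _ hb
  have hr1 : 1 ≤ x % b := by
    rcases hr0.lt_or_eq with h1 | h1
    · omega
    · exact absurd (Int.dvd_of_emod_eq_zero h1.symm) hnd
  have key : x - 1 = (x % b - 1) + (x / b) * b := by linarith
  rw [key, Int.add_mul_ediv_right _ _ hb.ne',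
    Int.ediv_eq_zero_of_lt (by omega) (by omega), zero_add]

private lemma tslab_formula (m h : ℕ) (hm : 0 < m) (hh : 0 < h) (α β : ℕ)
    (hαβ : m / Nat.gcd m h = α * (h / Nat.gcd m h) + β) (i : ℕ) :
    tslab m h i = (α : ℤ) + 1 +
      (((((i : ℤ) + 1) * β - 1) / ((h / Nat.gcd m h : ℕ) : ℤ))
        - ((i : ℤ) * β / ((h / Nat.gcd m h : ℕ) : ℤ))) := by
  set κ := Nat.gcd m h with hκdef
  have hκ : 0 < κ := Nat.gcd_pos_of_pos_left h hm
  set τm := m / κ with hτmdef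
  set τh := h / κ with hτhdef
  have hm' : m = τm * κ := (Nat.div_mul_cancel (Nat.gcd_dvd_left m h)).symm
  have hh' : h = τh * κ := (Nat.div_mul_cancel (Nat.gcd_dvd_right m h)).symm
  have hτh : 0 < τh := Nat.div_pos (Nat.le_of_dvd hh (Nat.gcd_dvd_right m h)) hκ
  have hκZ : (0 : ℤ) < (κ : ℤ) := by exact_mod_cast hκ
  have hτhZ : (0 : ℤ) < (τh : ℤ) := by exact_mod_cast hτh
  unfold tslab
  rw [Rat.floor_intCast_div_natCast, Rat.floor_intCast_div_natCast]
  have e1 : (((i : ℤ) + 1) * m - 1) / (h : ℤ) = (((i : ℤ) + 1) * τm - 1) / (τh : ℤ) := by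
    have : (((i : ℤ) + 1) * m - 1) = (((i : ℤ) + 1) * τm) * κ - 1 := by
      rw [hm']; push_cast; ring
    rw [this]
    have : (h : ℤ) = (τh : ℤ) * κ := by rw [hh']; push_cast; ring
    rw [this, ediv_kappa _ _ _ hτhZ hκZ]
  have e2 : ((i : ℤ) * m) / (h : ℤ) = ((i : ℤ) * τm) / (τh : ℤ) := by
    have h1 : ((i : ℤ) * m) = (κ : ℤ) * ((i : ℤ) * τm) := by rw [hm']; push_cast; ring
    have h2 : (h : ℤ) = (κ : ℤ) * (τh : ℤ) := by rw [hh']; push_cast; ring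
    rw [h1, h2, Int.mul_ediv_mul_of_pos _ _ hκZ]
  rw [e1, e2]
  have hτmZ : (τm : ℤ) = (α : ℤ) * τh + β := by exact_mod_cast hαβ
  have e3 : (((i : ℤ) + 1) * τm - 1) / (τh : ℤ)
      = (((i : ℤ) + 1) * β - 1) / (τh : ℤ) + ((i : ℤ) + 1) * α := by
    have : (((i : ℤ) + 1) * τm - 1) = (((i : ℤ) + 1) * β - 1) + (((i : ℤ) + 1) * α) * τh := by
      rw [hτmZ]; ring
    rw [this, Int.add_mul_ediv_right _ _ hτhZ.ne']
  have e4 : ((i : ℤ) * τm) / (τh : ℤ) = ((i : ℤ) * β) / (τh : ℤ) + (i : ℤ) * α := by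
    have : ((i : ℤ) * τm) = ((i : ℤ) * β) + ((i : ℤ) * α) * τh := by rw [hτmZ]; ring
    rw [this, Int.add_mul_ediv_right _ _ hτhZ.ne']
  rw [e3, e4]; ring

/-- The number of thread-blocks used by the naive patch-by-patch tiling of the
structured dense polygon with parameters `(r, l, h, l')`, in closed form. -/
theorem naive_tiling_count
    (r l h m n : ℕ) (l' : ℕ)
    (hr : 0 < r) (hl : 0 < l) (hh : 0 < h) (hm : 0 < m) (hn : 0 < n)
    (α β : ℕ)
    (hαβ : m / Nat.gcd m h = α * (h / Nat.gcd m h) + β)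
    (hβlt : β < h / Nat.gcd m h)
    (hdvd : (m / Nat.gcd m h) ∣ r)
    (K : ℕ) (hK : K = r * (h / Nat.gcd m h) / (m / Nat.gcd m h)) :
    (β = 0 →
      ∑ i ∈ Finset.range K, ⌈((wpatch m h l l' i : ℚ)) / (n : ℚ)⌉ =
        ((r / (m / Nat.gcd m h) : ℕ) : ℤ) *
          (((h / Nat.gcd m h : ℕ) : ℤ) * ⌈((l : ℚ) + ((α : ℚ) - 1) * (l' : ℚ)) / (n : ℚ)⌉))
    ∧ (β ≠ 0 →
      ∑ i ∈ Finset.range K, ⌈((wpatch m h l l' i : ℚ)) / (n : ℚ)⌉ =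
        ((r / (m / Nat.gcd m h) : ℕ) : ℤ) *
          (((β : ℤ) - 1) * ⌈((l : ℚ) + ((α : ℚ) + 1) * (l' : ℚ)) / (n : ℚ)⌉
            + (((h / Nat.gcd m h : ℕ) : ℤ) - (β : ℤ) + 1) *
                ⌈((l : ℚ) + (α : ℚ) * (l' : ℚ)) / (n : ℚ)⌉)) := by
  have hκ : 0 < Nat.gcd m h := Nat.gcd_pos_of_pos_left h hm
  set κ := Nat.gcd m h with hκdef
  set τm := m / κ with hτmdef
  set τh := h / κ with hτhdef
  have hτh : 0 < τh := Nat.div_pos (Nat.le_of_dvd hh (Nat.gcd_dvd_right m h)) hκ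
  have hτm : 0 < τm := Nat.div_pos (Nat.le_of_dvd hm (Nat.gcd_dvd_left m h)) hκ
  have hτhZ : (0 : ℤ) < (τh : ℤ) := by exact_mod_cast hτh
  have hcop : Nat.Coprime τm τh := Nat.coprime_div_gcd_div_gcd hκ
  set N := r / τm with hNdef
  have hrN : r = τm * N := (Nat.mul_div_cancel' hdvd).symm
  have hform := tslab_formula m h hm hh α β hαβ
  rw [show Nat.gcd m h = κ from rfl] at hform
  simp only [← hτhdef] at hform
  constructor
  · -- β = 0
    intro hβ0
    subst hβ0
    -- τh = 1
    have hτh1 : τh = 1 := by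
      have hdvd1 : τh ∣ τm := ⟨α, by rw [hαβ, Nat.add_zero, Nat.mul_comm]⟩
      exact Nat.dvd_one.mp (hcop ▸ Nat.dvd_gcd hdvd1 dvd_rfl)
    have htconst : ∀ i, tslab m h i = (α : ℤ) := by
      intro i
      rw [hform i, hτh1]
      push_cast
      simp
    have hwconst : ∀ i, (wpatch m h l l' i : ℚ) = (l : ℚ) + ((α : ℚ) - 1) * (l' : ℚ) := by
      intro i
      unfold wpatch
      rw [htconst i]
      push_cast
      ring
    have hKval : K = N := by rw [hK, hτh1, mul_one]
    calc ∑ i ∈ Finset.range K, ⌈((wpatch m h l l' i : ℚ)) / (n : ℚ)⌉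
        = ∑ _i ∈ Finset.range K, ⌈((l : ℚ) + ((α : ℚ) - 1) * (l' : ℚ)) / (n : ℚ)⌉ := by
          refine Finset.sum_congr rfl fun i _ => ?_
          rw [hwconst i]
      _ = (K : ℤ) * ⌈((l : ℚ) + ((α : ℚ) - 1) * (l' : ℚ)) / (n : ℚ)⌉ := by
          rw [Finset.sum_const, Finset.card_range]; push_cast; ring
      _ = _ := by rw [hKval, hτh1]; push_cast; ring
  · -- β ≠ 0
    intro hβ0
    have hβ1 : 1 ≤ β := Nat.one_le_iff_ne_zero.mpr hβ0
    have hβZ : (1 : ℤ) ≤ (β : ℤ) := by exact_mod_cast hβ1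
    have hβltZ : (β : ℤ) < (τh : ℤ) := by exact_mod_cast hβlt
    set c₁ := ⌈((l : ℚ) + ((α : ℚ) + 1) * (l' : ℚ)) / (n : ℚ)⌉ with hc₁
    set c₀ := ⌈((l : ℚ) + (α : ℚ) * (l' : ℚ)) / (n : ℚ)⌉ with hc₀
    set f : ℕ → ℤ := fun i => ⌈((wpatch m h l l' i : ℚ)) / (n : ℚ)⌉ with hf
    set D : ℕ → ℤ := fun i =>
      (((i : ℤ) + 1) * β - 1) / (τh : ℤ) - ((i : ℤ) * β) / (τh : ℤ) with hD
    -- D i ∈ {0, 1}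
    have hD01 : ∀ i, D i = 0 ∨ D i = 1 := by
      intro i
      have hlow : ((i : ℤ) * β) / (τh : ℤ) ≤ (((i : ℤ) + 1) * β - 1) / (τh : ℤ) :=
        Int.ediv_le_ediv hτhZ (by nlinarith)
      have hmodeq := Int.mul_ediv_add_emod ((i : ℤ) * β) (τh : ℤ)
      have hmod0 : 0 ≤ ((i : ℤ) * β) % (τh : ℤ) := Int.emod_nonneg _ hτhZ.ne'
      have hmodlt : ((i : ℤ) * β) % (τh : ℤ) < (τh : ℤ) := Int.emod_lt_of_pos _ hτhZ
      have hup : (((i : ℤ) + 1) * β - 1) / (τh : ℤ) < ((i : ℤ) * β) / (τh : ℤ) + 2 := by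
        rw [Int.ediv_lt_iff_lt_mul hτhZ]
        nlinarith
      simp only [hD]
      omega
    -- pointwise value of f
    have hfval : ∀ i, f i = c₀ + D i * (c₁ - c₀) := by
      intro i
      have ht : tslab m h i = (α : ℤ) + 1 + D i := hform i
      rcases hD01 i with h0 | h1
      · have hw : (wpatch m h l l' i : ℚ) = (l : ℚ) + (α : ℚ) * (l' : ℚ) := by
          unfold wpatch; rw [ht, h0]; push_cast; ring
        simp only [hf, hw, h0, zero_mul, add_zero, hc₀]
      · have hw : (wpatch m h l l' i : ℚ) = (l : ℚ) + ((α : ℚ) + 1) * (l' : ℚ) := by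
          unfold wpatch; rw [ht, h1]; push_cast; ring
        simp only [hf, hw, h1, one_mul, hc₁]; ring
    -- periodicity of D
    have hDper : ∀ i, D (i + τh) = D i := by
      intro i
      simp only [hD]
      push_cast
      have e1 : (((i : ℤ) + τh) + 1) * β - 1 = (((i : ℤ) + 1) * β - 1) + (β : ℤ) * τh := by ring
      have e2 : ((i : ℤ) + τh) * β = ((i : ℤ) * β) + (β : ℤ) * τh := by ring
      rw [e1, e2, Int.add_mul_ediv_right _ _ hτhZ.ne', Int.add_mul_ediv_right _ _ hτhZ.ne']
      ring
    -- sum of D over one period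
    have hDsum : ∑ i ∈ Finset.range τh, D i = (β : ℤ) - 1 := by
      set e : ℕ → ℤ := fun i => ((i : ℤ) * β - 1) / (τh : ℤ) with he
      set g : ℕ → ℤ := fun i => ((i : ℤ) * β) / (τh : ℤ) - e i with hg
      have hpt : ∀ i, D i = (e (i + 1) - e i) - g i := by
        intro i; simp only [hD, he, hg]; push_cast; ring
      have hgsum : ∑ i ∈ Finset.range τh, g i = 1 := by
        rw [Finset.sum_eq_single_of_mem 0 (Finset.mem_range.mpr hτh)]
        · have hneg : ((-1 : ℤ)) / (τh : ℤ) = -1 := by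
            have := ediv_kappa 0 1 (τh : ℤ) one_pos hτhZ
            simpa using this
          simp [hg, he, hneg]
        · intro i hi hi0
          have hilt : i < τh := Finset.mem_range.mp hi
          have hnd : ¬ ((τh : ℤ) ∣ (i : ℤ) * β) := by
            rw [← Nat.cast_mul, Int.natCast_dvd_natCast]
            intro hdd
            have : τh ∣ i := (Nat.Coprime.dvd_of_dvd_mul_right
              (Nat.Coprime.symm ((Nat.coprime_add_mul_right_left β τh α).mp
                (by rwa [Nat.add_comm, ← hαβ]))) hdd)
            have := Nat.le_of_dvd (Nat.pos_of_ne_zero hi0) this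
            omega
          simp only [hg, he]
          rw [ediv_sub_one_of_not_dvd _ _ hτhZ hnd]; ring
      have htel : ∑ i ∈ Finset.range τh, (e (i + 1) - e i) = e τh - e 0 :=
        Finset.sum_range_sub e τh
      have heτh : e τh = (β : ℤ) - 1 := by
        simp only [he]
        have := ediv_kappa (β : ℤ) 1 (τh : ℤ) one_pos hτhZ
        simpa [mul_comm] using this
      have he0 : e 0 = -1 := by
        have := ediv_kappa 0 1 (τh : ℤ) one_pos hτhZ
        simp only [he]
        push_cast
        simpa using this
      calc ∑ i ∈ Finset.range τh, D i
          = ∑ i ∈ Finset.range τh, ((e (i + 1) - e i) - g i) :=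
            Finset.sum_congr rfl fun i _ => hpt i
        _ = (∑ i ∈ Finset.range τh, (e (i + 1) - e i)) - ∑ i ∈ Finset.range τh, g i :=
            Finset.sum_sub_distrib _ _
        _ = (e τh - e 0) - 1 := by rw [htel, hgsum]
        _ = (β : ℤ) - 1 := by rw [heτh, he0]; ring
    -- sum of f over one period
    have hfsum : ∑ i ∈ Finset.range τh, f i
        = (τh : ℤ) * c₀ + ((β : ℤ) - 1) * (c₁ - c₀) := by
      calc ∑ i ∈ Finset.range τh, f i
          = ∑ i ∈ Finset.range τh, (c₀ + D i * (c₁ - c₀)) :=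
            Finset.sum_congr rfl fun i _ => hfval i
        _ = (τh : ℤ) * c₀ + (∑ i ∈ Finset.range τh, D i) * (c₁ - c₀) := by
            rw [Finset.sum_add_distrib, Finset.sum_const, Finset.card_range, ← Finset.sum_mul]
            push_cast; ring
        _ = _ := by rw [hDsum]
    have hform' : ∀ i, tslab m h i = (α : ℤ) + 1 + D i := fun i => hform i
    -- periodicity of f
    have hfper : ∀ i, f (i + τh) = f i := by
      intro i
      have ht : tslab m h (i + τh) = tslab m h i := by
        rw [hform', hform', hDper i]
      simp only [hf]
      unfold wpatch
      rw [ht]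
    -- sum over K patches
    have hKval : K = N * τh := by
      rw [hK, hrN, mul_assoc, Nat.mul_div_cancel_left _ hτm]
    have hshift : ∀ q j, f (q * τh + j) = f j := by
      intro q j
      induction q with
      | zero => simp
      | succ p ihp =>
        have hpe : (p + 1) * τh + j = (p * τh + j) + τh := by ring
        rw [hpe, hfper, ihp]
    have hmain : ∀ M : ℕ, ∑ i ∈ Finset.range (M * τh), f i
        = (M : ℤ) * ∑ i ∈ Finset.range τh, f i := by
      intro M
      induction M with
      | zero => simp
      | succ q ih =>
        have hq : (q + 1) * τh = q * τh + τh := by ring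
        rw [hq, Finset.sum_range_add, ih, Finset.sum_congr rfl fun j _ => hshift q j]
        push_cast; ring
    rw [hKval, hmain N, hfsum]
    push_cast; ring
end

section
/- Let m, h be positive integers, κ = gcd(m, h), τ_m = m/κ, τ_h = h/κ, and write τ_m = α·τ_h + β with 0 ≤ β < τ_h. Assume β ≠ 0. Then for every i with 0 ≤ i < τ_h, the slab-overlap count t_i = ⌊((i+1)·m − 1)/h⌋ − ⌊i·m/h⌋ + 1 lies in {α+1, α+2}; moreover exactly β − 1 of the indices i ∈ {0, …, τ_h − 1} satisfy t_i = α+2, and exactly τ_h − β + 1 of them satisfy t_i = α+1. -/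
private lemma sub_one_ediv (n b : ℤ) (hb : 0 < b) :
    (n - 1) / b = n / b - (if b ∣ n then 1 else 0) := by
  by_cases hd : b ∣ n
  · obtain ⟨q, rfl⟩ := hd
    rw [if_pos ⟨q, rfl⟩, Int.mul_ediv_cancel_left _ hb.ne',
      show b * q - 1 = (b - 1) + b * (q - 1) by ring,
      Int.add_mul_ediv_left _ _ hb.ne',
      Int.ediv_eq_zero_of_lt (by omega) (by omega)]
    ring
  · have hr0 : 0 ≤ n % b := Int.emod_nonneg n hb.ne'
    have hrne : n % b ≠ 0 := fun hc => hd (Int.dvd_of_emod_eq_zero hc)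
    have hrb : n % b < b := Int.emod_lt_of_pos n hb
    have h1 : n - 1 = (n % b - 1) + b * (n / b) := by
      have := Int.emod_add_mul_ediv n b; omega
    rw [h1, Int.add_mul_ediv_left _ _ hb.ne',
      Int.ediv_eq_zero_of_lt (by omega) (by omega)]
    simp [hd]

private lemma tslab_eq (m h : ℕ) (hh : 0 < h) (i : ℕ) :
    tslab m h i = (((i:ℤ)+1)*m) / h - ((i:ℤ)*m)/h + 1
      - (if (h:ℤ) ∣ ((i:ℤ)+1)*m then 1 else 0) := by
  unfold tslab
  rw [Rat.floor_intCast_div_natCast, Rat.floor_intCast_div_natCast,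
    sub_one_ediv _ _ (by exact_mod_cast hh)]
  ring

private lemma ediv_formula (κ τh α β : ℕ) (hκ : 0 < κ) (hτh : 0 < τh) (j : ℤ) :
    (j * (κ * (α * τh + β))) / ((κ * τh : ℕ) : ℤ)
      = j * α + (j * β) / (τh : ℤ) := by
  have hκτ : (0:ℤ) < (κ:ℤ) * τh := by positivity
  have h1 : j * ((κ:ℤ) * (α * τh + β)) = (κ:ℤ) * (j*β) + ((κ:ℤ)*τh) * (j*α) := by ring
  push_cast
  rw [h1, Int.add_mul_ediv_left _ _ hκτ.ne',
    Int.mul_ediv_mul_of_pos _ _ (by exact_mod_cast hκ)]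
  ring

/-- When `τ_m = α·τ_h + β` with `0 < β < τ_h` (where `τ_m = m/gcd(m,h)`,
`τ_h = h/gcd(m,h)`), every slab-overlap count `t_i` for `i < τ_h` is `α+1` or
`α+2`; exactly `β − 1` of them equal `α+2` and exactly `τ_h − β + 1` equal `α+1`. -/
theorem slab_overlap_counts
    (m h : ℕ) (hm : 0 < m) (hh : 0 < h)
    (α β : ℕ)
    (hαβ : m / Nat.gcd m h = α * (h / Nat.gcd m h) + β)
    (hβlt : β < h / Nat.gcd m h)
    (hβ : β ≠ 0) :
    (∀ i < h / Nat.gcd m h, tslab m h i = (α : ℤ) + 1 ∨ tslab m h i = (α : ℤ) + 2)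
    ∧ ((((Finset.range (h / Nat.gcd m h)).filter
          (fun i => tslab m h i = (α : ℤ) + 2)).card : ℤ) = (β : ℤ) - 1)
    ∧ ((((Finset.range (h / Nat.gcd m h)).filter
          (fun i => tslab m h i = (α : ℤ) + 1)).card : ℤ) =
        ((h / Nat.gcd m h : ℕ) : ℤ) - (β : ℤ) + 1) := by
  set κ := Nat.gcd m h with hκdef
  have hκ : 0 < κ := Nat.gcd_pos_of_pos_left h hm
  set τh := h / κ with hτhdef
  have hτh : 0 < τh := Nat.div_pos (Nat.le_of_dvd hh (Nat.gcd_dvd_right m h)) hκ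
  have hh' : h = κ * τh := (Nat.mul_div_cancel' (Nat.gcd_dvd_right m h)).symm
  have hm' : m = κ * (α * τh + β) := by
    rw [← hαβ]; exact (Nat.mul_div_cancel' (Nat.gcd_dvd_left m h)).symm
  have hcop : Nat.Coprime β τh := by
    have := Nat.coprime_div_gcd_div_gcd (m := m) (n := h) hκ
    rw [hαβ] at this
    rw [add_comm, mul_comm] at this
    exact (Nat.coprime_add_mul_left_left β τh α).mp this
  -- divisibility criterion
  have hdvd : ∀ j : ℕ, ((h:ℤ) ∣ ((j:ℤ)) * m) ↔ τh ∣ j := by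
    intro j
    have : ((h:ℤ) ∣ (j:ℤ) * m) ↔ h ∣ j * m := by
      constructor
      · intro hd; exact_mod_cast hd
      · intro hd; exact_mod_cast Int.natCast_dvd_natCast.mpr hd
    rw [this, hh', hm', mul_comm j (κ * (α * τh + β)), mul_assoc,
      Nat.mul_dvd_mul_iff_left hκ]
    have h2 : (α * τh + β) * j = (α * j) * τh + β * j := by ring
    rw [h2, Nat.dvd_add_right (dvd_mul_left τh (α * j))]
    constructor
    · intro hd
      exact (Nat.Coprime.dvd_of_dvd_mul_left (Nat.coprime_comm.mp hcop) hd)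
    · intro hd; exact Dvd.dvd.mul_left hd β
  -- quotient formula
  have hF : ∀ j : ℤ, (j * m) / (h:ℤ) = j * α + (j * β) / (τh:ℤ) := by
    intro j
    rw [hm', hh']
    exact_mod_cast ediv_formula κ τh α β hκ hτh j
  -- D values
  set D : ℕ → ℤ := fun i => (((i:ℤ)+1) * β) / (τh:ℤ) - ((i:ℤ) * β) / (τh:ℤ) with hD
  have hD01 : ∀ i : ℕ, D i = 0 ∨ D i = 1 := by
    intro i
    have h0 : ((i:ℤ) * β) / (τh:ℤ) ≤ (((i:ℤ)+1) * β) / (τh:ℤ) :=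
      Int.ediv_le_ediv (by exact_mod_cast hτh)
        (mul_le_mul_of_nonneg_right (by linarith) (by positivity))
    have h1 : (((i:ℤ)+1) * β) / (τh:ℤ) ≤ ((i:ℤ) * β) / (τh:ℤ) + 1 := by
      have : ((i:ℤ)+1) * β ≤ (i:ℤ) * β + (τh:ℤ) * 1 := by
        have : (β:ℤ) ≤ τh := by exact_mod_cast hβlt.le
        nlinarith
      calc (((i:ℤ)+1) * β) / (τh:ℤ) ≤ ((i:ℤ) * β + (τh:ℤ)*1) / (τh:ℤ) :=
            Int.ediv_le_ediv (by exact_mod_cast hτh) this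
        _ = ((i:ℤ) * β) / (τh:ℤ) + 1 := Int.add_mul_ediv_left _ _ (by positivity)
    simp only [hD]; omega
  -- tslab formula for all i
  have hts : ∀ i : ℕ, tslab m h i = (α:ℤ) + 1 + D i - (if τh ∣ (i+1) then 1 else 0) := by
    intro i
    rw [tslab_eq m h hh i]
    have hc : ((i:ℤ)+1) = ((i+1 : ℕ) : ℤ) := by push_cast; ring
    rw [hc]
    simp only [hdvd (i+1)]
    rw [hF, hF]
    simp only [hD]
    push_cast
    ring
  -- value on i < τh - 1 : no divisibility
  have hts1 : ∀ i : ℕ, i + 1 < τh → tslab m h i = (α:ℤ) + 1 + D i := by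
    intro i hi
    rw [hts i, if_neg (by intro hd; have := Nat.le_of_dvd (by omega) hd; omega)]
    ring
  -- D at τh - 1 equals 1
  have hDlast : D (τh - 1) = 1 := by
    have hc : ((τh - 1 : ℕ) : ℤ) = (τh:ℤ) - 1 := by
      have : (1:ℕ) ≤ τh := hτh; push_cast [this]; ring
    have e1 : (((τh:ℤ) - 1) + 1) * β / (τh:ℤ) = (β:ℤ) := by
      have : ((τh:ℤ) - 1 + 1) * β = 0 + (τh:ℤ) * β := by ring
      rw [this, Int.add_mul_ediv_left _ _ (by positivity : (0:ℤ) < (τh:ℤ)).ne']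
      simp
    have e2 : ((τh:ℤ) - 1) * β / (τh:ℤ) = (β:ℤ) - 1 := by
      have hβτ : (β:ℤ) ≤ τh := by exact_mod_cast hβlt.le
      have hβ0 : (1:ℤ) ≤ β := by exact_mod_cast Nat.one_le_iff_ne_zero.mpr hβ
      have : ((τh:ℤ) - 1) * β = ((τh:ℤ) - β) + (τh:ℤ) * (β - 1) := by ring
      rw [this, Int.add_mul_ediv_left _ _ (by positivity : (0:ℤ) < (τh:ℤ)).ne',
        Int.ediv_eq_zero_of_lt (by omega) (by omega)]
      ring
    simp only [hD, hc, e1, e2]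
    ring
  -- value at last index
  have htslast : tslab m h (τh - 1) = (α:ℤ) + 1 := by
    rw [hts, hDlast, if_pos (by rw [Nat.sub_add_cancel hτh] : τh ∣ (τh - 1 + 1))]
    ring
  have hne : ((α:ℤ) + 1) ≠ (α:ℤ) + 2 := by omega
  -- part 1
  have part1 : ∀ i < τh, tslab m h i = (α:ℤ) + 1 ∨ tslab m h i = (α:ℤ) + 2 := by
    intro i hi
    rcases Nat.lt_or_ge (i+1) τh with hlt | hge
    · rw [hts1 i hlt]
      rcases hD01 i with h0 | h0 <;> rw [h0] <;> [left; right] <;> ring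
    · have : i = τh - 1 := by omega
      rw [this, htslast]; left; rfl
  have hset : (Finset.range τh).filter (fun i => tslab m h i = (α:ℤ) + 2)
      = (Finset.range (τh - 1)).filter (fun i => D i = 1) := by
    ext i
    simp only [Finset.mem_filter, Finset.mem_range]
    constructor
    · rintro ⟨hi, ht⟩
      have hilt : i + 1 < τh := by
        by_contra hc
        have : i = τh - 1 := by omega
        rw [this, htslast] at ht; exact hne ht
      refine ⟨by omega, ?_⟩
      rw [hts1 i hilt] at ht
      rcases hD01 i with h0 | h0
      · rw [h0] at ht; omega
      · exact h0
    · rintro ⟨hi, hd⟩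
      refine ⟨by omega, ?_⟩
      rw [hts1 i (by omega), hd]; ring
  have hsum : ∑ i ∈ Finset.range (τh - 1), D i
      = (((τh - 1 : ℕ) : ℤ) * β) / (τh:ℤ) := by
    have ht := Finset.sum_range_sub (fun i => ((i:ℤ) * β) / (τh:ℤ)) (τh - 1)
    simp only [Nat.cast_zero, zero_mul, Int.zero_ediv, sub_zero] at ht
    rw [← ht]
    refine Finset.sum_congr rfl fun i _ => ?_
    simp only [hD]
    push_cast
    ring
  have hsum2 : ∑ i ∈ Finset.range (τh - 1), D i = (β:ℤ) - 1 := by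
    rw [hsum]
    have hc : ((τh - 1 : ℕ) : ℤ) = (τh:ℤ) - 1 := by
      have : (1:ℕ) ≤ τh := hτh; push_cast [this]; ring
    have hβτ : (β:ℤ) ≤ τh := by exact_mod_cast hβlt.le
    have hβ0 : (1:ℤ) ≤ β := by exact_mod_cast Nat.one_le_iff_ne_zero.mpr hβ
    rw [hc,
      show ((τh:ℤ) - 1) * β = ((τh:ℤ) - β) + (τh:ℤ) * (β - 1) by ring,
      Int.add_mul_ediv_left _ _ (by positivity : (0:ℤ) < (τh:ℤ)).ne',
      Int.ediv_eq_zero_of_lt (by omega) (by omega)]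
    ring
  have hboole : ∑ i ∈ Finset.range (τh - 1), D i
      = (((Finset.range (τh - 1)).filter (fun i => D i = 1)).card : ℤ) := by
    rw [show (∑ i ∈ Finset.range (τh - 1), D i)
        = ∑ i ∈ Finset.range (τh - 1), (if D i = 1 then (1:ℤ) else 0) from
      Finset.sum_congr rfl (fun i _ => by rcases hD01 i with h0 | h0 <;> simp [h0])]
    exact Finset.sum_boole _ _
  have card2 : ((((Finset.range τh).filter (fun i => tslab m h i = (α:ℤ) + 2)).card : ℤ))
      = (β:ℤ) - 1 := by
    rw [hset]; omega
  refine ⟨part1, card2, ?_⟩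
  have hcompl : (Finset.range τh).filter (fun i => tslab m h i = (α:ℤ) + 1)
      = (Finset.range τh).filter (fun i => ¬ (tslab m h i = (α:ℤ) + 2)) := by
    ext i
    simp only [Finset.mem_filter, Finset.mem_range]
    constructor
    · rintro ⟨hi, ht⟩; exact ⟨hi, by rw [ht]; omega⟩
    · rintro ⟨hi, ht⟩
      rcases part1 i hi with h0 | h0
      · exact ⟨hi, h0⟩
      · exact absurd h0 ht
  have hadd := Finset.card_filter_add_card_filter_not
    (s := Finset.range τh) (p := fun i => tslab m h i = (α:ℤ) + 2)
  rw [Finset.card_range] at hadd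
  rw [hcompl]
  omega
end

section
/- Let P be the structured dense polygon with parameters (r, l, h, l') and let m, n be positive integers. Let TB be any finite family of thread-blocks of size m×n, each with stretch factor 1 and anchor lying in P, whose covers together contain every point of P. For a positive integer k with k·m ≤ r·h, let λ^(k) be the number of blocks in TB whose anchor row (second coordinate of the anchor) is less than k·m, and let δ^(k) be the number of blocks in TB whose anchor row lies in the interval [(k−1)·m + 1, k·m − 1] (blocks anchored in the first k patches that extend past row k·m − 1). Then λ^(k) − δ^(k) ≥ Σ_{i=0}^{k−1} ⌈w_i/n⌉ − Σ_{i=0}^{k−1} ⌈(w_i − l)/n⌉. -/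
/-- The structured dense polygon with parameters `(r, l, h, l')`. -/
def polygonMask (r l h l' : ℕ) : Set (ℤ × ℤ) :=
  {p | ∃ t y : ℤ, 0 ≤ t ∧ t < l ∧ 0 ≤ y ∧ y < r * h ∧ p = ((y / h) * l' + t, y)}

/-- For any stretch-1 tiling of the structured dense polygon by thread-blocks
anchored in the polygon, the number `λ^(k)` of blocks anchored in the first
`k` patches minus the number `δ^(k)` of blocks that overflow out of the first
`k` patches is at least `Σ_{i<k} ⌈w_i/n⌉ − Σ_{i<k} ⌈(w_i − l)/n⌉`. -/
theorem poset_tiling_inductive_bound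
    (r l h l' : ℕ) (hr : 0 < r) (hl : 0 < l) (hh : 0 < h)
    (m n : ℕ) (hm : 0 < m) (hn : 0 < n)
    (N : ℕ) (anchor : Fin N → ℤ × ℤ)
    (hanch : ∀ b, anchor b ∈ polygonMask r l h l')
    (hcover : ∀ p ∈ polygonMask r l h l',
      ∃ b, p ∈ Comp (anchor b).1 (anchor b).2 1 m n ∩ polygonMask r l h l')
    (k : ℕ) (hk : 0 < k) (hkm : k * m ≤ r * h) :
    (∑ i ∈ Finset.range k, ⌈((wpatch m h l l' i : ℚ)) / (n : ℚ)⌉)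
      - (∑ i ∈ Finset.range k, ⌈((wpatch m h l l' i : ℚ) - (l : ℚ)) / (n : ℚ)⌉)
    ≤ ((Finset.univ.filter
          (fun b : Fin N => (anchor b).2 < (k : ℤ) * m)).card : ℤ)
      - ((Finset.univ.filter
          (fun b : Fin N =>
            ((k : ℤ) - 1) * m + 1 ≤ (anchor b).2 ∧ (anchor b).2 ≤ (k : ℤ) * m - 1)).card : ℤ) := by
  classical
  -- The boundary-row points: for `i < k` and `t < l`, the point `(q·l' + t, i·m)`
  -- where `q = (i·m)/h` lies in the polygon.
  set P : ℕ → ℕ → ℤ × ℤ :=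
    fun i t => (((i : ℤ) * m / h) * l' + t, (i : ℤ) * m) with hP
  have hmem : ∀ i < k, ∀ t < l, P i t ∈ polygonMask r l h l' := by
    intro i hi t ht
    refine ⟨(t : ℤ), (i : ℤ) * m, by positivity, by exact_mod_cast ht, by positivity, ?_, rfl⟩
    have h1 : (i : ℤ) + 1 ≤ (k : ℤ) := by exact_mod_cast hi
    have h2 : ((i : ℤ) + 1) * m ≤ (k : ℤ) * m := by
      apply mul_le_mul_of_nonneg_right h1 (by positivity)
    have h3 : (k : ℤ) * m ≤ (r : ℤ) * h := by exact_mod_cast hkm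
    have hm' : (0 : ℤ) < m := by exact_mod_cast hm
    nlinarith
  -- Choose, for each such point, a block covering it.
  have hN : Nonempty (Fin N) := by
    obtain ⟨b, -⟩ := hcover (P 0 0) (hmem 0 hk 0 hl)
    exact ⟨b⟩
  have hex : ∀ i < k, ∀ t < l,
      ∃ b, P i t ∈ Comp (anchor b).1 (anchor b).2 1 m n := by
    intro i hi t ht
    obtain ⟨b, hb⟩ := hcover (P i t) (hmem i hi t ht)
    exact ⟨b, hb.1⟩
  set F : ℕ → ℕ → Fin N := fun i t =>
    if hq : i < k ∧ t < l then (hex i hq.1 t hq.2).choose else hN.some with hF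
  have hFspec : ∀ i < k, ∀ t < l,
      P i t ∈ Comp (anchor (F i t)).1 (anchor (F i t)).2 1 m n := by
    intro i hi t ht
    simp only [hF, dif_pos (And.intro hi ht)]
    exact (hex i hi t ht).choose_spec
  -- Extract coordinate bounds from block membership.
  have hbounds : ∀ i < k, ∀ t < l,
      (anchor (F i t)).1 ≤ ((i : ℤ) * m / h) * l' + t ∧
      ((i : ℤ) * m / h) * l' + t < (anchor (F i t)).1 + n ∧
      (anchor (F i t)).2 ≤ (i : ℤ) * m ∧
      (i : ℤ) * m < (anchor (F i t)).2 + m := by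
    intro i hi t ht
    obtain ⟨ii, jj, hii, hjj, heq⟩ := hFspec i hi t ht
    have h1 : ((i : ℤ) * m / h) * l' + t = (anchor (F i t)).1 + ii * 1 := congrArg Prod.fst heq
    have h2 : (i : ℤ) * m = (anchor (F i t)).2 + jj * 1 := congrArg Prod.snd heq
    have hii' : (ii : ℤ) < n := by exact_mod_cast hii
    have hjj' : (jj : ℤ) < m := by exact_mod_cast hjj
    have hii0 : (0 : ℤ) ≤ ii := by positivity
    have hjj0 : (0 : ℤ) ≤ jj := by positivity
    constructor
    · omega
    constructor
    · omega
    constructor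
    · omega
    · omega
  -- The family of blocks covering boundary row `i·m`.
  set T : ℕ → Finset (Fin N) := fun i => (Finset.range l).image (F i) with hT
  -- Each `T i` has at least `⌈l/n⌉` elements.
  have hcardT : ∀ i < k, (⌈((l : ℚ)) / (n : ℚ)⌉ : ℤ) ≤ ((T i).card : ℤ) := by
    intro i hi
    have hfib : ∀ b ∈ (Finset.range l).image (F i),
        ((Finset.range l).filter (fun t => F i t = b)).card ≤ n := by
      intro b _
      have hsub : ∀ t ∈ (Finset.range l).filter (fun t => F i t = b),
          (t : ℤ) ∈ Finset.Ico ((anchor b).1 - ((i : ℤ) * m / h) * l')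
            ((anchor b).1 - ((i : ℤ) * m / h) * l' + n) := by
        intro t htmem
        simp only [Finset.mem_filter, Finset.mem_range] at htmem
        obtain ⟨ht, hfb⟩ := htmem
        obtain ⟨hb1, hb2, -, -⟩ := hbounds i hi t ht
        rw [hfb] at hb1 hb2
        simp only [Finset.mem_Ico]
        omega
      have hinj : Set.InjOn (fun t : ℕ => (t : ℤ))
          ↑((Finset.range l).filter (fun t => F i t = b)) := by
        intro a _ c _ hac
        exact Nat.cast_injective hac
      have := Finset.card_le_card_of_injOn (fun t : ℕ => (t : ℤ)) hsub hinj
      rwa [Int.card_Ico, add_sub_cancel_left, Int.toNat_natCast] at this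
    have hl2 : l ≤ n * (T i).card := by
      have := Finset.card_le_mul_card_image (f := F i) (Finset.range l) n hfib
      simpa using this
    have hl3 : ((l : ℚ)) / (n : ℚ) ≤ ((T i).card : ℚ) := by
      rw [div_le_iff₀ (by exact_mod_cast hn), mul_comm]
      exact_mod_cast hl2
    exact Int.ceil_le.mpr (by exact_mod_cast hl3)
  -- The `T i` are pairwise disjoint for `i ∈ range k`.
  have hdisj : ∀ i ∈ Finset.range k, ∀ j ∈ Finset.range k, i ≠ j →
      Disjoint (T i) (T j) := by
    intro i hi j hj hij
    rw [Finset.mem_range] at hi hj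
    rw [Finset.disjoint_left]
    intro b hbi hbj
    simp only [hT, Finset.mem_image, Finset.mem_range] at hbi hbj
    obtain ⟨t, ht, hbt⟩ := hbi
    obtain ⟨s, hs, hbs⟩ := hbj
    obtain ⟨-, -, hi1, hi2⟩ := hbounds i hi t ht
    obtain ⟨-, -, hj1, hj2⟩ := hbounds j hj s hs
    rw [hbt] at hi1 hi2
    rw [hbs] at hj1 hj2
    have hm' : (0 : ℤ) < m := by exact_mod_cast hm
    have h1 : (i : ℤ) * m < ((j : ℤ) + 1) * m := by nlinarith
    have h2 : (j : ℤ) * m < ((i : ℤ) + 1) * m := by nlinarith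
    have h3 : (i : ℤ) < (j : ℤ) + 1 := lt_of_mul_lt_mul_right h1 (le_of_lt hm')
    have h4 : (j : ℤ) < (i : ℤ) + 1 := lt_of_mul_lt_mul_right h2 (le_of_lt hm')
    have : (i : ℤ) = (j : ℤ) := by omega
    exact hij (by exact_mod_cast this)
  -- The union of the `T i` sits inside the set of blocks with anchor row ≤ (k−1)·m.
  set A : Finset (Fin N) :=
    Finset.univ.filter (fun b : Fin N => (anchor b).2 ≤ ((k : ℤ) - 1) * m) with hA
  have hsubA : (Finset.range k).biUnion T ⊆ A := by
    intro b hb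
    simp only [Finset.mem_biUnion, hT, Finset.mem_image, Finset.mem_range] at hb
    obtain ⟨i, hi, t, ht, hbt⟩ := hb
    obtain ⟨-, -, hi1, -⟩ := hbounds i hi t ht
    rw [hbt] at hi1
    simp only [hA, Finset.mem_filter, Finset.mem_univ, true_and]
    have h1 : (i : ℤ) ≤ (k : ℤ) - 1 := by
      have : (i : ℤ) < k := by exact_mod_cast hi
      omega
    have hm0 : (0 : ℤ) ≤ m := by positivity
    calc (anchor b).2 ≤ (i : ℤ) * m := hi1
      _ ≤ ((k : ℤ) - 1) * m := mul_le_mul_of_nonneg_right h1 hm0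
  -- Count: sum of cards of `T i` ≤ card A.
  have hsum : ∑ i ∈ Finset.range k, ((T i).card : ℤ) ≤ (A.card : ℤ) := by
    have h1 : ((Finset.range k).biUnion T).card = ∑ i ∈ Finset.range k, (T i).card :=
      Finset.card_biUnion hdisj
    have h2 : ((Finset.range k).biUnion T).card ≤ A.card :=
      Finset.card_le_card hsubA
    rw [h1] at h2
    exact_mod_cast h2
  -- `λ − δ ≥ card A`.
  set L : Finset (Fin N) :=
    Finset.univ.filter (fun b : Fin N => (anchor b).2 < (k : ℤ) * m) with hL
  set D : Finset (Fin N) :=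
    Finset.univ.filter (fun b : Fin N =>
      ((k : ℤ) - 1) * m + 1 ≤ (anchor b).2 ∧ (anchor b).2 ≤ (k : ℤ) * m - 1) with hD
  have hAD : (A.card : ℤ) ≤ (L.card : ℤ) - (D.card : ℤ) := by
    have hADdisj : Disjoint A D := by
      rw [Finset.disjoint_left]
      intro b hbA hbD
      simp only [hA, Finset.mem_filter, Finset.mem_univ, true_and] at hbA
      simp only [hD, Finset.mem_filter, Finset.mem_univ, true_and] at hbD
      omega
    have hADL : A ∪ D ⊆ L := by
      intro b hb
      simp only [hL, Finset.mem_filter, Finset.mem_univ, true_and]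
      rcases Finset.mem_union.mp hb with hbA | hbD
      · simp only [hA, Finset.mem_filter, Finset.mem_univ, true_and] at hbA
        have hm' : (0 : ℤ) < m := by exact_mod_cast hm
        nlinarith
      · simp only [hD, Finset.mem_filter, Finset.mem_univ, true_and] at hbD
        omega
    have := Finset.card_le_card hADL
    rw [Finset.card_union_of_disjoint hADdisj] at this
    push_cast
    omega
  -- Per-patch ceiling bound: `⌈w/n⌉ − ⌈(w−l)/n⌉ ≤ ⌈l/n⌉`.
  have hceil : ∀ i : ℕ,
      ⌈((wpatch m h l l' i : ℚ)) / (n : ℚ)⌉ - ⌈((wpatch m h l l' i : ℚ) - (l : ℚ)) / (n : ℚ)⌉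
        ≤ ⌈((l : ℚ)) / (n : ℚ)⌉ := by
    intro i
    have heq : ((wpatch m h l l' i : ℚ)) / (n : ℚ)
        = ((wpatch m h l l' i : ℚ) - (l : ℚ)) / (n : ℚ) + ((l : ℚ)) / (n : ℚ) := by
      rw [← add_div]; ring_nf
    have := Int.ceil_add_le (((wpatch m h l l' i : ℚ) - (l : ℚ)) / (n : ℚ)) (((l : ℚ)) / (n : ℚ))
    rw [← heq] at this
    omega
  -- Combine everything.
  calc (∑ i ∈ Finset.range k, ⌈((wpatch m h l l' i : ℚ)) / (n : ℚ)⌉)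
        - (∑ i ∈ Finset.range k, ⌈((wpatch m h l l' i : ℚ) - (l : ℚ)) / (n : ℚ)⌉)
      = ∑ i ∈ Finset.range k,
          (⌈((wpatch m h l l' i : ℚ)) / (n : ℚ)⌉
            - ⌈((wpatch m h l l' i : ℚ) - (l : ℚ)) / (n : ℚ)⌉) := by
        rw [Finset.sum_sub_distrib]
    _ ≤ ∑ i ∈ Finset.range k, (⌈((l : ℚ)) / (n : ℚ)⌉ : ℤ) :=
        Finset.sum_le_sum fun i _ => hceil i
    _ ≤ ∑ i ∈ Finset.range k, ((T i).card : ℤ) :=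
        Finset.sum_le_sum fun i hi => hcardT i (Finset.mem_range.mp hi)
    _ ≤ (A.card : ℤ) := hsum
    _ ≤ (L.card : ℤ) - (D.card : ℤ) := hAD
end

section
/- Let P be the structured dense polygon with parameters (r, l, h, l'), let m, n be positive integers with m dividing r·h, and let K = r·h/m. Define λ_naive = Σ_{i=0}^{K−1} ⌈w_i/n⌉. Then any finite family of λ thread-blocks of size m×n, each with stretch factor 1 and anchor lying in P, whose covers together contain every point of P, satisfies λ ≥ λ_naive − Σ_{i=0}^{K−1} ⌈(w_i − l)/n⌉; that is, the naive patch-by-patch tiling uses at most Σ_{i=0}^{K−1} ⌈(w_i − l)/n⌉ more thread-blocks than any valid tiling anchored in P. -/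
/-- The naive patch-by-patch tiling count `λ_naive = Σ_{i<K} ⌈w_i/n⌉` exceeds
the count of any valid stretch-1 tiling anchored in the polygon by at most
`Σ_{i<K} ⌈(w_i − l)/n⌉`. -/
theorem naive_tiling_near_optimal
    (r l h l' : ℕ) (hr : 0 < r) (hl : 0 < l) (hh : 0 < h)
    (m n : ℕ) (hm : 0 < m) (hn : 0 < n)
    (hdvd : m ∣ r * h) (K : ℕ) (hK : K = r * h / m)
    (N : ℕ) (anchor : Fin N → ℤ × ℤ)
    (hanch : ∀ b, anchor b ∈ polygonMask r l h l')
    (hcover : ∀ p ∈ polygonMask r l h l',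
      ∃ b, p ∈ Comp (anchor b).1 (anchor b).2 1 m n ∩ polygonMask r l h l') :
    (∑ i ∈ Finset.range K, ⌈((wpatch m h l l' i : ℚ)) / (n : ℚ)⌉)
      - (∑ i ∈ Finset.range K, ⌈((wpatch m h l l' i : ℚ) - (l : ℚ)) / (n : ℚ)⌉)
    ≤ (N : ℤ) := by
  have hn' : (0 : ℚ) < (n : ℚ) := by exact_mod_cast hn
  set c : ℤ := ⌈(l : ℚ) / (n : ℚ)⌉ with hc
  have hc1 : 1 ≤ c := by
    have : (0 : ℚ) < (l : ℚ) / (n : ℚ) :=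
      div_pos (by exact_mod_cast hl) hn'
    exact Int.lt_ceil.mpr (by exact_mod_cast this)
  -- Step 1: LHS ≤ K * c
  have step1 : (∑ i ∈ Finset.range K, ⌈((wpatch m h l l' i : ℚ)) / (n : ℚ)⌉)
      - (∑ i ∈ Finset.range K, ⌈((wpatch m h l l' i : ℚ) - (l : ℚ)) / (n : ℚ)⌉)
      ≤ (K : ℤ) * c := by
    rw [sub_le_iff_le_add]
    have : ∀ i ∈ Finset.range K,
        ⌈((wpatch m h l l' i : ℚ)) / (n : ℚ)⌉
          ≤ ⌈((wpatch m h l l' i : ℚ) - (l : ℚ)) / (n : ℚ)⌉ + c := by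
      intro i _
      have he : ((wpatch m h l l' i : ℚ)) / (n : ℚ)
          = ((wpatch m h l l' i : ℚ) - (l : ℚ)) / (n : ℚ) + (l : ℚ) / (n : ℚ) := by
        ring
      rw [he]
      exact Int.ceil_add_le _ _
    calc (∑ i ∈ Finset.range K, ⌈((wpatch m h l l' i : ℚ)) / (n : ℚ)⌉)
        ≤ ∑ i ∈ Finset.range K,
            (⌈((wpatch m h l l' i : ℚ) - (l : ℚ)) / (n : ℚ)⌉ + c) :=
          Finset.sum_le_sum this
      _ = (K : ℤ) * c
          + ∑ i ∈ Finset.range K, ⌈((wpatch m h l l' i : ℚ) - (l : ℚ)) / (n : ℚ)⌉ := by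
          rw [Finset.sum_add_distrib]
          simp [mul_comm, add_comm]
  -- Step 2: K * c ≤ N
  have hKm : (K : ℤ) * m = (r : ℤ) * h := by
    subst hK
    obtain ⟨k, hk⟩ := hdvd
    have : r * h / m * m = r * h := by
      rw [hk]; rw [Nat.mul_div_cancel_left _ hm]; ring
    exact_mod_cast this
  -- the special points
  set C : ℕ → ℤ := fun j => (((j : ℤ) * m) / (h : ℤ)) * l' with hC
  have hcn : ((c - 1) : ℤ) * n < l := by
    have h1 : ((c : ℚ)) < (l : ℚ) / (n : ℚ) + 1 := Int.ceil_lt_add_one _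
    have h2 : ((c : ℚ) - 1) * n < l := by
      rw [← lt_div_iff₀ hn']; linarith
    exact_mod_cast h2
  have hmem : ∀ j : ℕ, j < K → ∀ k : ℕ, (k : ℤ) < c →
      ((C j + (k : ℤ) * n, ((j : ℤ) * m)) : ℤ × ℤ) ∈ polygonMask r l h l' := by
    intro j hj k hk
    refine ⟨(k : ℤ) * n, (j : ℤ) * m, ?_, ?_, ?_, ?_, ?_⟩
    · positivity
    · have : (k : ℤ) ≤ c - 1 := by omega
      calc (k : ℤ) * n ≤ (c - 1) * n := by
            apply mul_le_mul_of_nonneg_right this (by positivity)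
        _ < l := hcn
    · positivity
    · have : (j : ℤ) + 1 ≤ K := by exact_mod_cast hj
      calc (j : ℤ) * m < ((j : ℤ) + 1) * m := by nlinarith [(by exact_mod_cast hm : (0:ℤ) < m)]
        _ ≤ (K : ℤ) * m := by nlinarith [(by exact_mod_cast hm : (0:ℤ) < m)]
        _ = (r : ℤ) * h := hKm
    · simp [hC]
  -- choose a block for each special point
  set cN : ℕ := c.toNat with hcN
  have hcNc : (cN : ℤ) = c := Int.toNat_of_nonneg (by omega)
  have hmem' : ∀ p : Fin K × Fin cN,
      ((C p.1 + ((p.2 : ℕ) : ℤ) * n, (((p.1 : ℕ) : ℤ) * m)) : ℤ × ℤ)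
        ∈ polygonMask r l h l' := by
    intro p
    exact hmem p.1 p.1.isLt p.2 (by have := p.2.isLt; omega)
  let f : Fin K × Fin cN → Fin N := fun p => (hcover _ (hmem' p)).choose
  have hspec : ∀ p : Fin K × Fin cN,
      ((C p.1 + ((p.2 : ℕ) : ℤ) * n, (((p.1 : ℕ) : ℤ) * m)) : ℤ × ℤ)
        ∈ Comp (anchor (f p)).1 (anchor (f p)).2 1 m n :=
    fun p => (hcover _ (hmem' p)).choose_spec.1
  have hinj : Function.Injective f := by
    intro p q hpq
    obtain ⟨i1, j1, hi1, hj1, hp1⟩ := hspec p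
    obtain ⟨i2, j2, hi2, hj2, hp2⟩ := hspec q
    rw [hpq] at hp1
    have hx1 : C p.1 + ((p.2 : ℕ) : ℤ) * n = (anchor (f q)).1 + i1 := by
      have := congrArg Prod.fst hp1; simpa using this
    have hy1 : (((p.1 : ℕ) : ℤ)) * m = (anchor (f q)).2 + j1 := by
      have := congrArg Prod.snd hp1; simpa using this
    have hx2 : C q.1 + ((q.2 : ℕ) : ℤ) * n = (anchor (f q)).1 + i2 := by
      have := congrArg Prod.fst hp2; simpa using this
    have hy2 : (((q.1 : ℕ) : ℤ)) * m = (anchor (f q)).2 + j2 := by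
      have := congrArg Prod.snd hp2; simpa using this
    -- first components of indices equal
    have hym : (((p.1 : ℕ) : ℤ) - ((q.1 : ℕ) : ℤ)) * m = (j1 : ℤ) - j2 := by
      have : (((p.1 : ℕ) : ℤ)) * m - (((q.1 : ℕ) : ℤ)) * m = (j1 : ℤ) - j2 := by
        omega
      linarith [this]
    have hm' : (0 : ℤ) < m := by exact_mod_cast hm
    have hj1' : (j1 : ℤ) < m := by exact_mod_cast hj1
    have hj2' : (j2 : ℤ) < m := by exact_mod_cast hj2
    have hd : (((p.1 : ℕ) : ℤ) - ((q.1 : ℕ) : ℤ)) = 0 := by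
      by_contra hne
      rcases lt_or_gt_of_ne hne with hlt | hgt
      · have : (((p.1 : ℕ) : ℤ) - ((q.1 : ℕ) : ℤ)) * m ≤ -1 * m := by
          apply mul_le_mul_of_nonneg_right (by omega) (by omega)
        have := hym ▸ this
        have hj1nn : (0 : ℤ) ≤ j1 := by positivity
        omega
      · have : 1 * m ≤ (((p.1 : ℕ) : ℤ) - ((q.1 : ℕ) : ℤ)) * m := by
          apply mul_le_mul_of_nonneg_right (by omega) (by omega)
        have := hym ▸ this
        have hj2nn : (0 : ℤ) ≤ j2 := by positivity
        omega
    have hpq1 : (p.1 : ℕ) = (q.1 : ℕ) := by omega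
    have hCeq : C p.1 = C q.1 := by rw [hC]; simp [hpq1]
    -- second components
    have hxm : (((p.2 : ℕ) : ℤ) - ((q.2 : ℕ) : ℤ)) * n = (i1 : ℤ) - i2 := by
      have : C p.1 + ((p.2 : ℕ) : ℤ) * n - (C q.1 + ((q.2 : ℕ) : ℤ) * n)
          = (i1 : ℤ) - i2 := by omega
      rw [hCeq] at this
      linarith [this]
    have hn'' : (0 : ℤ) < n := by exact_mod_cast hn
    have hi1' : (i1 : ℤ) < n := by exact_mod_cast hi1
    have hi2' : (i2 : ℤ) < n := by exact_mod_cast hi2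
    have hd2 : (((p.2 : ℕ) : ℤ) - ((q.2 : ℕ) : ℤ)) = 0 := by
      by_contra hne
      rcases lt_or_gt_of_ne hne with hlt | hgt
      · have : (((p.2 : ℕ) : ℤ) - ((q.2 : ℕ) : ℤ)) * n ≤ -1 * n := by
          apply mul_le_mul_of_nonneg_right (by omega) (by omega)
        have := hxm ▸ this
        have : (0 : ℤ) ≤ i1 := by positivity
        omega
      · have : 1 * n ≤ (((p.2 : ℕ) : ℤ) - ((q.2 : ℕ) : ℤ)) * n := by
          apply mul_le_mul_of_nonneg_right (by omega) (by omega)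
        have := hxm ▸ this
        have : (0 : ℤ) ≤ i2 := by positivity
        omega
    have hpq2 : (p.2 : ℕ) = (q.2 : ℕ) := by omega
    exact Prod.ext (Fin.ext hpq1) (Fin.ext hpq2)
  have hcard : K * cN ≤ N := by
    have := Fintype.card_le_of_injective f hinj
    simpa using this
  have step2 : (K : ℤ) * c ≤ (N : ℤ) := by
    have : ((K * cN : ℕ) : ℤ) ≤ (N : ℤ) := by exact_mod_cast hcard
    push_cast at this
    rw [hcNc] at this
    exact this
  exact le_trans step1 step2
end
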